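/- arXiv:2106.06508 — 13 statements merged into one kernel-verified Lean document; each statement's English description precedes it below -/
import Mathlib

section
/- Let 0 ≤ γ < 1. Then I − P^β = (I − γ·P·(I−B))⁻¹·(I − γ·P). -/
open Matrix

attribute [local instance] Matrix.linftyOpNormedRing Matrix.linftyOpNormedAlgebra

/-- `I − P^β = (I − γ·P·(I−B))⁻¹·(I − γ·P)` where
`P^β = γ·(I − γ·P·(I−B))⁻¹·P·B`. -/
theorem stmt_2 {S : Type*} [Fintype S] [Nonempty S] [DecidableEq S]
    (P : Matrix S S ℝ) (hP0 : ∀ s s', 0 ≤ P s s') (hP1 : ∀ s, ∑ s', P s s' = 1)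
    (β : S → ℝ) (hβ0 : ∀ s, 0 ≤ β s) (hβ1 : ∀ s, β s ≤ 1)
    (γ : ℝ) (hγ0 : 0 ≤ γ) (hγ1 : γ < 1) :
    let B := diagonal β
    let Pβ := γ • ((1 - γ • (P * (1 - B)))⁻¹ * P * B)
    1 - Pβ = (1 - γ • (P * (1 - B)))⁻¹ * (1 - γ • P) := by
  intro B Pβ
  have hnorm : ‖γ • (P * (1 - B))‖ < 1 := by
    rw [linfty_opNorm_def]
    rw [show ((1:ℝ) = ((1:NNReal):ℝ)) by norm_num, NNReal.coe_lt_coe]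
    apply lt_of_le_of_lt (Finset.sup_le (fun i _ => ?_)) (show (⟨γ, hγ0⟩:NNReal) < 1 by
      exact_mod_cast hγ1)
    have hentry : ∀ j, (γ • (P * (1 - B))) i j = γ * (P i j * (1 - β j)) := by
      intro j
      simp [B, Matrix.mul_apply, Matrix.sub_apply, Matrix.one_apply, diagonal,
        Finset.mul_sum]
      rw [Finset.sum_eq_single j] <;> simp +contextual [Matrix.of_apply, eq_comm]
    have hnn : ∀ j, 0 ≤ (γ • (P * (1 - B))) i j := by
      intro j
      rw [hentry j]
      exact mul_nonneg hγ0 (mul_nonneg (hP0 i j) (by linarith [hβ1 j]))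
    calc (∑ j, ‖(γ • (P * (1 - B))) i j‖₊ : NNReal)
        ≤ ∑ j, (show NNReal from ⟨γ * P i j, mul_nonneg hγ0 (hP0 i j)⟩) := by
          apply Finset.sum_le_sum
          intro j _
          refine NNReal.coe_le_coe.mp ?_
          show _ ≤ γ * P i j
          have hx : (0:ℝ) ≤ γ * (P i j * (1 - β j)) := by
            have := hnn j; rwa [hentry j] at this
          simp only [coe_nnnorm, Real.norm_eq_abs, hentry j, abs_of_nonneg hx,
            NNReal.coe_mk]
          nlinarith [mul_nonneg (mul_nonneg hγ0 (hP0 i j)) (hβ0 j)]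
      _ = (show NNReal from ⟨γ, hγ0⟩) := by
          refine NNReal.coe_inj.mp ?_
          rw [NNReal.coe_sum]
          change ∑ j, γ * P i j = γ
          rw [← Finset.mul_sum, hP1 i, mul_one]
  have hU : IsUnit (1 - γ • (P * (1 - B))) :=
    (Units.oneSub _ hnorm).isUnit
  have hinv : (1 - γ • (P * (1 - B)))⁻¹ * (1 - γ • (P * (1 - B))) = 1 :=
    nonsing_inv_mul _ ((isUnit_iff_isUnit_det _).mp hU)
  have key : (1 : Matrix S S ℝ) - γ • P
      = (1 - γ • (P * (1 - B))) - γ • (P * B) := by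
    rw [mul_sub, mul_one, smul_sub]
    abel
  rw [key, mul_sub, hinv]
  simp only [Pβ, Matrix.mul_smul, mul_assoc]
end

section
/- Let 0 ≤ γ < 1. Then every entry of P^β is nonnegative, and every row sum of P^β is at most γ; in particular, P^β is a sub-stochastic matrix. -/
open Matrix Finset

section aux

variable {S : Type*} [Fintype S] [Nonempty S] [DecidableEq S]

/-- Nonneg matrices with bounded row sums: products. -/
lemma aux_mul_nonneg {A C : Matrix S S ℝ} (hA : ∀ s s', 0 ≤ A s s')
    (hC : ∀ s s', 0 ≤ C s s') : ∀ s s', 0 ≤ (A * C) s s' := by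
  intro s s'
  rw [Matrix.mul_apply]
  exact Finset.sum_nonneg fun t _ => mul_nonneg (hA s t) (hC t s')

lemma aux_mul_rowsum {A C : Matrix S S ℝ} {a c : ℝ} (hA : ∀ s s', 0 ≤ A s s')
    (hc : 0 ≤ c) (hAr : ∀ s, ∑ s', A s s' ≤ a) (hCr : ∀ s, ∑ s', C s s' ≤ c) :
    ∀ s, ∑ s', (A * C) s s' ≤ a * c := by
  intro s
  have : ∑ s', (A * C) s s' = ∑ t, A s t * ∑ s', C t s' := by
    simp_rw [Matrix.mul_apply, Finset.mul_sum]
    rw [Finset.sum_comm]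
  rw [this]
  calc ∑ t, A s t * ∑ s', C t s' ≤ ∑ t, A s t * c := by
        refine Finset.sum_le_sum fun t _ => mul_le_mul_of_nonneg_left (hCr t) (hA s t)
    _ = (∑ t, A s t) * c := by rw [Finset.sum_mul]
    _ ≤ a * c := mul_le_mul_of_nonneg_right (hAr s) hc

end aux

/-- every entry of `P^β` is nonnegative and every row sum of `P^β`
is at most `γ`; in particular `P^β` is sub-stochastic. -/
theorem stmt_3 {S : Type*} [Fintype S] [Nonempty S] [DecidableEq S]
    (P : Matrix S S ℝ) (hP0 : ∀ s s', 0 ≤ P s s') (hP1 : ∀ s, ∑ s', P s s' = 1)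
    (β : S → ℝ) (hβ0 : ∀ s, 0 ≤ β s) (hβ1 : ∀ s, β s ≤ 1)
    (γ : ℝ) (hγ0 : 0 ≤ γ) (hγ1 : γ < 1) :
    let B := diagonal β
    let Pβ := γ • ((1 - γ • (P * (1 - B)))⁻¹ * P * B)
    (∀ s s', 0 ≤ Pβ s s') ∧ (∀ s, ∑ s', Pβ s s' ≤ γ) := by
  intro B Pβ
  set M : Matrix S S ℝ := γ • (P * (1 - B)) with hMdef
  -- entries of M
  have hone : (1 : Matrix S S ℝ) - B = diagonal (fun s => 1 - β s) := by
    rw [show (1 : Matrix S S ℝ) = diagonal (fun _ => 1) from (Matrix.diagonal_one).symm]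
    rw [Matrix.diagonal_sub]
  have hMentry : ∀ s s', M s s' = γ * (P s s' * (1 - β s')) := by
    intro s s'
    simp [hMdef, hone, Matrix.mul_diagonal]
  have hM0 : ∀ s s', 0 ≤ M s s' := by
    intro s s'
    rw [hMentry]
    exact mul_nonneg hγ0 (mul_nonneg (hP0 s s') (by linarith [hβ1 s']))
  have hMrow : ∀ s, ∑ s', M s s' ≤ γ := by
    intro s
    simp_rw [hMentry]
    rw [← Finset.mul_sum]
    have h1 : ∑ s', P s s' * (1 - β s') ≤ ∑ s', P s s' :=
      Finset.sum_le_sum fun s' _ => by nlinarith [hP0 s s', hβ0 s']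
    rw [hP1 s] at h1
    nlinarith
  -- M^k properties
  have hMk : ∀ k : ℕ, (∀ s s', 0 ≤ (M ^ k) s s') ∧ (∀ s, ∑ s', (M ^ k) s s' ≤ γ ^ k) := by
    intro k
    induction k with
    | zero =>
      constructor
      · intro s s'
        simp [Matrix.one_apply]
        split <;> norm_num
      · intro s; simp [Matrix.one_apply]
    | succ n ih =>
      have hpow : M ^ (n + 1) = M ^ n * M := pow_succ M n
      constructor
      · rw [hpow]; exact aux_mul_nonneg ih.1 hM0
      · rw [hpow, pow_succ]
        exact aux_mul_rowsum ih.1 hγ0 ih.2 hMrow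
  -- invertibility of 1 - M
  have hUnit : IsUnit (1 - M) := by
    rw [← Matrix.mulVec_injective_iff_isUnit]
    intro x y hxy
    simp only [Matrix.sub_mulVec, Matrix.one_mulVec] at hxy
    have hz : ∀ s, x s - y s = ∑ t, M s t * (x t - y t) := by
      intro s
      have h := congrFun hxy s
      simp only [Pi.sub_apply, Matrix.mulVec, dotProduct] at h
      have hsplit : ∑ t, M s t * (x t - y t)
          = (∑ t, M s t * x t) - ∑ t, M s t * y t := by
        rw [← Finset.sum_sub_distrib]
        exact Finset.sum_congr rfl fun t _ => by ring
      rw [hsplit]; linarith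
    -- max argument
    obtain ⟨s, -, hs⟩ := Finset.exists_max_image Finset.univ (fun s => |x s - y s|) ⟨Classical.arbitrary S, Finset.mem_univ _⟩
    have key : |x s - y s| ≤ γ * |x s - y s| := by
      calc |x s - y s| = |∑ t, M s t * (x t - y t)| := by rw [hz s]
        _ ≤ ∑ t, |M s t * (x t - y t)| := Finset.abs_sum_le_sum_abs _ _
        _ = ∑ t, M s t * |x t - y t| := by
            refine Finset.sum_congr rfl fun t _ => ?_
            rw [abs_mul, abs_of_nonneg (hM0 s t)]
        _ ≤ ∑ t, M s t * |x s - y s| :=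
            Finset.sum_le_sum fun t _ =>
              mul_le_mul_of_nonneg_left (hs t (Finset.mem_univ t)) (hM0 s t)
        _ = (∑ t, M s t) * |x s - y s| := by rw [Finset.sum_mul]
        _ ≤ γ * |x s - y s| :=
            mul_le_mul_of_nonneg_right (hMrow s) (abs_nonneg _)
    have hzero : |x s - y s| = 0 := by nlinarith [abs_nonneg (x s - y s)]
    funext t
    have ht : |x t - y t| ≤ 0 := hzero ▸ hs t (Finset.mem_univ t)
    have := abs_nonneg (x t - y t)
    have : |x t - y t| = 0 := le_antisymm ht this
    rw [abs_eq_zero] at this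
    linarith
  have hdet : IsUnit (1 - M).det := (Matrix.isUnit_iff_isUnit_det _).mp hUnit
  set N : Matrix S S ℝ := (1 - M)⁻¹ with hNdef
  have hNl : N * (1 - M) = 1 := Matrix.nonsing_inv_mul _ hdet
  have hNr : (1 - M) * N = 1 := Matrix.mul_nonsing_inv _ hdet
  -- N = (partial geometric sum) + M^k * N
  have hgeom : ∀ k : ℕ, N = (∑ i ∈ Finset.range k, M ^ i) + M ^ k * N := by
    intro k
    have h1 : (∑ i ∈ Finset.range k, M ^ i) * (1 - M) = 1 - M ^ k := by
      have := geom_sum_mul M k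
      have h2 : (∑ i ∈ Finset.range k, M ^ i) * (1 - M)
          = -((∑ i ∈ Finset.range k, M ^ i) * (M - 1)) := by noncomm_ring
      rw [h2, this]; noncomm_ring
    calc N = 1 * N := (one_mul N).symm
      _ = ((∑ i ∈ Finset.range k, M ^ i) * (1 - M) + M ^ k) * N := by
            rw [h1]; noncomm_ring
      _ = (∑ i ∈ Finset.range k, M ^ i) * ((1 - M) * N) + M ^ k * N := by noncomm_ring
      _ = (∑ i ∈ Finset.range k, M ^ i) + M ^ k * N := by rw [hNr, mul_one]
  -- nonnegativity of N
  have hN0 : ∀ s s', 0 ≤ N s s' := by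
    intro s s'
    set C : ℝ := ∑ t, |N t s'| with hC
    have hbound : ∀ k : ℕ, -(γ ^ k * C) ≤ N s s' := by
      intro k
      have hNk := congrFun (congrFun (hgeom k) s) s'
      simp only [Matrix.add_apply, Matrix.sum_apply] at hNk
      have hS : 0 ≤ ∑ i ∈ Finset.range k, (M ^ i) s s' :=
        Finset.sum_nonneg fun i _ => (hMk i).1 s s'
      have hMN : -(γ ^ k * C) ≤ (M ^ k * N) s s' := by
        rw [Matrix.mul_apply]
        have : ∀ t, -(γ ^ k * |N t s'|) ≤ (M ^ k) s t * N t s' := by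
          intro t
          have h1 : (M ^ k) s t ≤ γ ^ k := by
            calc (M ^ k) s t ≤ ∑ u, (M ^ k) s u :=
                  Finset.single_le_sum (fun u _ => (hMk k).1 s u) (Finset.mem_univ t)
              _ ≤ γ ^ k := (hMk k).2 s
          have h2 : -((M ^ k) s t * |N t s'|) ≤ (M ^ k) s t * N t s' := by
            have := neg_abs_le (N t s')
            nlinarith [(hMk k).1 s t, abs_nonneg (N t s')]
          have h3 : (M ^ k) s t * |N t s'| ≤ γ ^ k * |N t s'| :=
            mul_le_mul_of_nonneg_right h1 (abs_nonneg _)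
          linarith
        calc -(γ ^ k * C) = ∑ t, -(γ ^ k * |N t s'|) := by
              rw [hC, Finset.mul_sum, ← Finset.sum_neg_distrib]
          _ ≤ ∑ t, (M ^ k) s t * N t s' := Finset.sum_le_sum fun t _ => this t
      linarith
    by_contra h
    push_neg at h
    have hγC : Filter.Tendsto (fun k : ℕ => γ ^ k * C) Filter.atTop (nhds 0) := by
      have := (tendsto_pow_atTop_nhds_zero_of_lt_one hγ0 hγ1).mul_const C
      simpa using this
    have : (0 : ℝ) ≤ N s s' := by
      have hneg : Filter.Tendsto (fun k : ℕ => -(γ ^ k * C)) Filter.atTop (nhds 0) := by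
        simpa using hγC.neg
      exact le_of_tendsto hneg (Filter.Eventually.of_forall hbound)
    linarith
  -- entries of Pβ
  have hPβdef : Pβ = γ • (N * P * B) := rfl
  have hNP0 : ∀ s s', 0 ≤ (N * P) s s' := aux_mul_nonneg hN0 hP0
  have hPβentry : ∀ s s', Pβ s s' = γ * ((N * P) s s' * β s') := by
    intro s s'
    simp [hPβdef, Matrix.mul_diagonal, B]
  constructor
  · intro s s'
    rw [hPβentry]
    exact mul_nonneg hγ0 (mul_nonneg (hNP0 s s') (hβ0 s'))
  · intro s
    -- row sum identity
    -- u t := ∑ s', P t s' * β s'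
    set u : S → ℝ := fun t => ∑ s', P t s' * β s' with hu
    have hrowM : ∀ t, ∑ s', (1 - M) t s' = (1 - γ) + γ * u t := by
      intro t
      have h1 : ∑ s', ((1 : Matrix S S ℝ) - M) t s' = ∑ s', ((1 : Matrix S S ℝ) t s' - M t s') := rfl
      rw [h1, Finset.sum_sub_distrib]
      have h2 : ∑ s', (1 : Matrix S S ℝ) t s' = 1 := by simp [Matrix.one_apply]
      have h3 : ∑ s', M t s' = γ * (1 - u t) := by
        simp_rw [hMentry]
        rw [← Finset.mul_sum, hu]
        have : ∑ s', P t s' * (1 - β s') = (∑ s', P t s') - ∑ s', P t s' * β s' := by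
          rw [← Finset.sum_sub_distrib]; ring_nf
        rw [this, hP1 t]
      rw [h2, h3]; ring
    -- ∑_{s'} Pβ s s' = γ * ∑_t N s t * u t
    have hsum : ∑ s', Pβ s s' = γ * ∑ t, N s t * u t := by
      simp_rw [hPβentry]
      rw [← Finset.mul_sum]
      congr 1
      simp_rw [Matrix.mul_apply, Finset.sum_mul]
      rw [Finset.sum_comm]
      refine Finset.sum_congr rfl fun t _ => ?_
      rw [hu, Finset.mul_sum]
      refine Finset.sum_congr rfl fun s' _ => by ring
    -- key identity: (1-γ) * (∑ t, N s t) + γ * (∑ t, N s t * u t) = 1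
    have hkey : (1 - γ) * (∑ t, N s t) + γ * (∑ t, N s t * u t) = 1 := by
      have h1 : ∑ s', (N * (1 - M)) s s' = 1 := by
        rw [hNl]; simp [Matrix.one_apply]
      have h2 : ∑ s', (N * (1 - M)) s s' = ∑ t, N s t * ((1 - γ) + γ * u t) := by
        simp_rw [Matrix.mul_apply]
        rw [Finset.sum_comm]
        refine Finset.sum_congr rfl fun t _ => ?_
        rw [← Finset.mul_sum, hrowM t]
      rw [h2] at h1
      have h3 : ∑ t, N s t * ((1 - γ) + γ * u t)
          = (1 - γ) * (∑ t, N s t) + γ * (∑ t, N s t * u t) := by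
        rw [Finset.mul_sum, Finset.mul_sum, ← Finset.sum_add_distrib]
        refine Finset.sum_congr rfl fun t _ => by ring
      rw [h3] at h1
      exact h1
    -- ∑ t, N s t ≥ 1
    have hNrow : 1 ≤ ∑ t, N s t := by
      have hN1 : N = 1 + N * M := by
        have h : N * (1 - M) = N - N * M := by noncomm_ring
        rw [h] at hNl
        exact sub_eq_iff_eq_add.mp hNl
      rw [hN1]
      have : ∑ t, ((1 : Matrix S S ℝ) + N * M) s t = ∑ t, ((1 : Matrix S S ℝ) s t + (N * M) s t) := rfl
      rw [this, Finset.sum_add_distrib]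
      have h2 : ∑ t, (1 : Matrix S S ℝ) s t = 1 := by simp [Matrix.one_apply]
      have h3 : 0 ≤ ∑ t, (N * M) s t :=
        Finset.sum_nonneg fun t _ => aux_mul_nonneg hN0 hM0 s t
      linarith
    rw [hsum]
    nlinarith [hkey, hNrow]
end

section
/- Let 0 ≤ γ < 1. Then every diagonal entry of the matrix I − P^β is at least 1 − γ (hence positive), and every row sum of I − P^β is at least 1 − γ (hence positive). -/
open Matrix Finset Filter

section aux

variable {S : Type*} [Fintype S] [DecidableEq S]

/-- Powers of a nonnegative matrix with row sums at most `γ` have nonnegative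
entries and row sums at most `γ ^ n`. -/
lemma aux_pow {x : Matrix S S ℝ} {γ : ℝ} (hγ : 0 ≤ γ)
    (hx0 : ∀ s s', 0 ≤ x s s') (hx1 : ∀ s, ∑ s', x s s' ≤ γ) (n : ℕ) :
    (∀ s s', 0 ≤ (x ^ n) s s') ∧ (∀ s, ∑ s', (x ^ n) s s' ≤ γ ^ n) := by
  induction n with
  | zero =>
    refine ⟨fun s s' => ?_, fun s => ?_⟩
    · rw [pow_zero, Matrix.one_apply]
      split <;> norm_num
    · simp [Matrix.one_apply]
  | succ n ih =>
    have h1 : ∀ s s', 0 ≤ (x ^ (n+1)) s s' := by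
      intro s s'
      rw [pow_succ', Matrix.mul_apply]
      exact Finset.sum_nonneg fun t _ => mul_nonneg (hx0 s t) (ih.1 t s')
    refine ⟨h1, fun s => ?_⟩
    have hrw : ∑ s', (x ^ (n+1)) s s' = ∑ t, x s t * ∑ s', (x ^ n) t s' := by
      simp only [pow_succ', Matrix.mul_apply]
      rw [Finset.sum_comm]
      simp [Finset.mul_sum]
    rw [hrw]
    calc ∑ t, x s t * ∑ s', (x ^ n) t s' ≤ ∑ t, x s t * γ ^ n :=
          Finset.sum_le_sum fun t _ => mul_le_mul_of_nonneg_left (ih.2 t) (hx0 s t)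
      _ = (∑ t, x s t) * γ ^ n := by rw [Finset.sum_mul]
      _ ≤ γ * γ ^ n := mul_le_mul_of_nonneg_right (hx1 s) (pow_nonneg hγ n)
      _ = γ ^ (n+1) := (pow_succ' γ n).symm

/-- If `x` is entrywise nonnegative with row sums at most `γ < 1` and `1 - x` is
invertible, then `(1 - x)⁻¹` is entrywise nonnegative and has row sums at least `1`. -/
lemma aux_inv {x : Matrix S S ℝ} {γ : ℝ} (hγ0 : 0 ≤ γ) (hγ1 : γ < 1)
    (hx0 : ∀ s s', 0 ≤ x s s') (hx1 : ∀ s, ∑ s', x s s' ≤ γ)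
    (hM : IsUnit (1 - x).det) :
    (∀ s s', 0 ≤ (1 - x)⁻¹ s s') ∧ (∀ s, 1 ≤ ∑ s', (1 - x)⁻¹ s s') := by
  set N := (1 - x)⁻¹ with hN
  have hMN : (1 - x) * N = 1 := Matrix.mul_nonsing_inv _ hM
  -- geometric sum with remainder: ∑_{i<n} x^i = N - x^n * N
  have key : ∀ n : ℕ, (∑ i ∈ Finset.range n, x ^ i) = N - x ^ n * N := by
    intro n
    have h2 : (∑ i ∈ Finset.range n, x ^ i) * (1 - x) = 1 - x ^ n := by
      have h := geom_sum_mul x n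
      calc (∑ i ∈ Finset.range n, x ^ i) * (1 - x)
          = -((∑ i ∈ Finset.range n, x ^ i) * (x - 1)) := by rw [← mul_neg, neg_sub]
        _ = -(x ^ n - 1) := by rw [h]
        _ = 1 - x ^ n := by rw [neg_sub]
    calc (∑ i ∈ Finset.range n, x ^ i)
        = (∑ i ∈ Finset.range n, x ^ i) * ((1 - x) * N) := by rw [hMN, mul_one]
      _ = ((∑ i ∈ Finset.range n, x ^ i) * (1 - x)) * N := by rw [mul_assoc]
      _ = (1 - x ^ n) * N := by rw [h2]
      _ = N - x ^ n * N := by rw [sub_mul, one_mul]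
  set K : ℝ := ∑ t, ∑ u, |N t u| with hK
  have hK0 : 0 ≤ K := Finset.sum_nonneg fun t _ => Finset.sum_nonneg fun u _ => abs_nonneg _
  -- entrywise bound on the remainder
  have hrem : ∀ (n : ℕ) (s s' : S), |(x ^ n * N) s s'| ≤ γ ^ n * K := by
    intro n s s'
    have hp := aux_pow hγ0 hx0 hx1 n
    have hentry : ∀ t, (x ^ n) s t ≤ γ ^ n := fun t =>
      le_trans (Finset.single_le_sum (f := fun u => (x ^ n) s u)
        (fun u _ => hp.1 s u) (Finset.mem_univ t)) (hp.2 s)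
    calc |(x ^ n * N) s s'| = |∑ t, (x ^ n) s t * N t s'| := by rw [Matrix.mul_apply]
      _ ≤ ∑ t, |(x ^ n) s t * N t s'| := Finset.abs_sum_le_sum_abs _ _
      _ = ∑ t, (x ^ n) s t * |N t s'| := by
          refine Finset.sum_congr rfl fun t _ => ?_
          rw [abs_mul, abs_of_nonneg (hp.1 s t)]
      _ ≤ ∑ t, γ ^ n * |N t s'| :=
          Finset.sum_le_sum fun t _ => mul_le_mul_of_nonneg_right (hentry t) (abs_nonneg _)
      _ = γ ^ n * ∑ t, |N t s'| := by rw [Finset.mul_sum]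
      _ ≤ γ ^ n * K := by
          refine mul_le_mul_of_nonneg_left ?_ (pow_nonneg hγ0 n)
          refine Finset.sum_le_sum fun t _ => ?_
          exact Finset.single_le_sum (f := fun u => |N t u|)
            (fun u _ => abs_nonneg _) (Finset.mem_univ s')
  have hγpow : Tendsto (fun n : ℕ => γ ^ n) atTop (nhds 0) :=
    tendsto_pow_atTop_nhds_zero_of_lt_one hγ0 hγ1
  constructor
  · intro s s'
    have hbound : ∀ n : ℕ, -(γ ^ n * K) ≤ N s s' := by
      intro n
      have hk := key n
      have h1 : 0 ≤ (∑ i ∈ Finset.range n, x ^ i) s s' := by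
        rw [Matrix.sum_apply]
        exact Finset.sum_nonneg fun i _ => (aux_pow hγ0 hx0 hx1 i).1 s s'
      have h2 : (∑ i ∈ Finset.range n, x ^ i) s s' = N s s' - (x ^ n * N) s s' := by
        rw [hk, Matrix.sub_apply]
      have h3 := neg_abs_le ((x ^ n * N) s s')
      have h4 := hrem n s s'
      linarith [neg_le_neg h4]
    have hlim : Tendsto (fun n : ℕ => -(γ ^ n * K)) atTop (nhds 0) := by
      have := (hγpow.mul_const K).neg
      simpa using this
    exact le_of_tendsto' hlim hbound
  · intro s
    have hbound : ∀ n : ℕ, 1 - (Fintype.card S : ℝ) * (γ ^ (n+1) * K) ≤ ∑ s', N s s' := by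
      intro n
      have hk := key (n+1)
      have h2 : ∑ s', (∑ i ∈ Finset.range (n+1), x ^ i) s s'
          = ∑ s', N s s' - ∑ s', (x ^ (n+1) * N) s s' := by
        rw [hk]
        simp [Matrix.sub_apply, Finset.sum_sub_distrib]
      have h1 : (1 : ℝ) ≤ ∑ s', (∑ i ∈ Finset.range (n+1), x ^ i) s s' := by
        have : ∑ s', (∑ i ∈ Finset.range (n+1), x ^ i) s s'
            = ∑ i ∈ Finset.range (n+1), ∑ s', (x ^ i) s s' := by
          simp only [Matrix.sum_apply]
          rw [Finset.sum_comm]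
        rw [this]
        have hz : ∑ s', (x ^ 0) s s' = 1 := by simp [Matrix.one_apply]
        calc (1:ℝ) = ∑ s', (x ^ 0) s s' := hz.symm
          _ ≤ ∑ i ∈ Finset.range (n+1), ∑ s', (x ^ i) s s' :=
            Finset.single_le_sum (f := fun i => ∑ s', (x ^ i) s s')
              (fun i _ => Finset.sum_nonneg fun s' _ => (aux_pow hγ0 hx0 hx1 i).1 s s')
              (Finset.mem_range.mpr (Nat.succ_pos n))
      have h3 : -((Fintype.card S : ℝ) * (γ ^ (n+1) * K)) ≤ ∑ s', (x ^ (n+1) * N) s s' := by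
        calc -((Fintype.card S : ℝ) * (γ ^ (n+1) * K))
            = ∑ s' : S, -(γ ^ (n+1) * K) := by
              rw [Finset.sum_const, nsmul_eq_mul, Finset.card_univ, mul_neg]
          _ ≤ ∑ s', (x ^ (n+1) * N) s s' :=
              Finset.sum_le_sum fun s' _ => le_trans (neg_le_neg (hrem (n+1) s s'))
                (neg_abs_le _)
      linarith
    have hlim : Tendsto (fun n : ℕ => 1 - (Fintype.card S : ℝ) * (γ ^ (n+1) * K)) atTop
        (nhds 1) := by
      have h1 : Tendsto (fun n : ℕ => ((Fintype.card S : ℝ) * (K * γ)) * γ ^ n) atTop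
          (nhds (((Fintype.card S : ℝ) * (K * γ)) * 0)) :=
        hγpow.const_mul _
      have h2 : Tendsto (fun n : ℕ => (Fintype.card S : ℝ) * (γ ^ (n+1) * K)) atTop
          (nhds 0) := by
        have heq : (fun n : ℕ => (Fintype.card S : ℝ) * (γ ^ (n+1) * K))
            = fun n : ℕ => ((Fintype.card S : ℝ) * (K * γ)) * γ ^ n := by
          funext n; ring
        rw [heq]
        simpa using h1
      have := (tendsto_const_nhds (x := (1:ℝ)) (f := atTop)).sub h2
      simpa using this
    exact le_of_tendsto' hlim hbound

end aux

/-- every diagonal entry of `I − P^β` is at least `1 − γ` (hence positive),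
and every row sum of `I − P^β` is at least `1 − γ` (hence positive). -/
theorem stmt_4 {S : Type*} [Fintype S] [Nonempty S] [DecidableEq S]
    (P : Matrix S S ℝ) (hP0 : ∀ s s', 0 ≤ P s s') (hP1 : ∀ s, ∑ s', P s s' = 1)
    (β : S → ℝ) (hβ0 : ∀ s, 0 ≤ β s) (hβ1 : ∀ s, β s ≤ 1)
    (γ : ℝ) (hγ0 : 0 ≤ γ) (hγ1 : γ < 1) :
    let B := diagonal β
    let Pβ := γ • ((1 - γ • (P * (1 - B)))⁻¹ * P * B)
    (∀ s, 1 - γ ≤ (1 - Pβ) s s) ∧ (∀ s, 0 < (1 - Pβ) s s) ∧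
      (∀ s, 1 - γ ≤ ∑ s', (1 - Pβ) s s') ∧ (∀ s, 0 < ∑ s', (1 - Pβ) s s') := by
  intro B Pβ
  set x : Matrix S S ℝ := γ • (P * (1 - B)) with hxdef
  -- entrywise formula for x
  have hBsub : (1 - B : Matrix S S ℝ) = diagonal (fun t => 1 - β t) := by
    rw [show (1 : Matrix S S ℝ) = diagonal (fun _ => 1) from (Matrix.diagonal_one).symm]
    rw [Matrix.diagonal_sub]
  have hxapp : ∀ s s', x s s' = γ * (P s s' * (1 - β s')) := by
    intro s s'
    rw [hxdef, Matrix.smul_apply, hBsub, Matrix.mul_diagonal, smul_eq_mul]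
  have hx0 : ∀ s s', 0 ≤ x s s' := by
    intro s s'
    rw [hxapp]
    exact mul_nonneg hγ0 (mul_nonneg (hP0 s s') (by linarith [hβ1 s']))
  have hx1 : ∀ s, ∑ s', x s s' ≤ γ := by
    intro s
    calc ∑ s', x s s' ≤ ∑ s', γ * P s s' := by
          refine Finset.sum_le_sum fun s' _ => ?_
          rw [hxapp]
          refine mul_le_mul_of_nonneg_left ?_ hγ0
          have := hβ0 s'
          nlinarith [hP0 s s']
      _ = γ * ∑ s', P s s' := by rw [Finset.mul_sum]
      _ = γ := by rw [hP1 s, mul_one]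
  -- Key facts about Pβ
  have hmain : (∀ s s', 0 ≤ Pβ s s') ∧ (∀ s, ∑ s', Pβ s s' ≤ γ) := by
    by_cases hM : IsUnit (1 - x).det
    · obtain ⟨hN0, hN1⟩ := aux_inv hγ0 hγ1 hx0 hx1 hM
      set N : Matrix S S ℝ := (1 - x)⁻¹ with hNdef
      have hPβeq : Pβ = γ • (N * P * B) := rfl
      have hPβapp : ∀ s s', Pβ s s' = γ * ((N * P) s s' * β s') := by
        intro s s'
        rw [hPβeq, Matrix.smul_apply, Matrix.mul_assoc, smul_eq_mul]
        congr 1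
        rw [← Matrix.mul_assoc]
        exact Matrix.mul_diagonal ..
      have hNP0 : ∀ s s', 0 ≤ (N * P) s s' := by
        intro s s'
        rw [Matrix.mul_apply]
        exact Finset.sum_nonneg fun t _ => mul_nonneg (hN0 s t) (hP0 t s')
      constructor
      · intro s s'
        rw [hPβapp]
        exact mul_nonneg hγ0 (mul_nonneg (hNP0 s s') (hβ0 s'))
      · intro s
        -- N * x = N - 1
        have hNx : N * x = N - 1 := by
          have hNM : N * (1 - x) = 1 := Matrix.nonsing_inv_mul _ hM
          rw [Matrix.mul_sub, Matrix.mul_one] at hNM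
          calc N * x = N - (N - N * x) := by abel
            _ = N - 1 := by rw [hNM]
        -- row sums of Pβ
        have step1 : ∑ s', Pβ s s' = ∑ t, N s t * (γ * ∑ s', P t s' * β s') := by
          have h1 : ∑ s', Pβ s s' = ∑ s', ∑ t, γ * (N s t * P t s' * β s') := by
            refine Finset.sum_congr rfl fun s' _ => ?_
            rw [hPβapp, Matrix.mul_apply, Finset.sum_mul, Finset.mul_sum]
          rw [h1, Finset.sum_comm]
          refine Finset.sum_congr rfl fun t _ => ?_
          simp only [Finset.mul_sum]
          exact Finset.sum_congr rfl fun s' _ => by ring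
        have step2 : ∀ t, γ * ∑ s', P t s' * β s' = γ - ∑ s', x t s' := by
          intro t
          calc γ * ∑ s', P t s' * β s'
              = ∑ s', (γ * P t s' - γ * (P t s' * (1 - β s'))) := by
                rw [Finset.mul_sum]
                exact Finset.sum_congr rfl fun s' _ => by ring
            _ = (∑ s', γ * P t s') - ∑ s', γ * (P t s' * (1 - β s')) :=
                Finset.sum_sub_distrib _ _
            _ = γ - ∑ s', x t s' := by
                rw [← Finset.mul_sum, hP1 t, mul_one]
                congr 1
                exact Finset.sum_congr rfl fun s' _ => (hxapp t s').symm
        have step3 : ∑ t, N s t * ∑ s', x t s' = (∑ s', N s s') - 1 := by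
          have h1 : ∑ t, N s t * ∑ s', x t s' = ∑ s', (N * x) s s' := by
            simp only [Finset.mul_sum]
            rw [Finset.sum_comm]
            exact Finset.sum_congr rfl fun s' _ => (Matrix.mul_apply ..).symm
          rw [h1, hNx]
          simp [Matrix.sub_apply, Finset.sum_sub_distrib, Matrix.one_apply]
        have step4 : ∑ s', Pβ s s' = γ * (∑ t, N s t) - ((∑ s', N s s') - 1) := by
          rw [step1]
          have : ∑ t, N s t * (γ * ∑ s', P t s' * β s')
              = ∑ t, (N s t * γ - N s t * ∑ s', x t s') := by
            refine Finset.sum_congr rfl fun t _ => ?_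
            rw [step2 t]; ring
          rw [this, Finset.sum_sub_distrib, ← step3]
          congr 1
          rw [Finset.mul_sum]
          exact Finset.sum_congr rfl fun t _ => mul_comm _ _
        have hsame : ∑ t, N s t = ∑ s', N s s' := rfl
        rw [step4, hsame]
        nlinarith [hN1 s]
    · have hinv : (1 - x)⁻¹ = 0 := Matrix.nonsing_inv_apply_not_isUnit _ hM
      have : Pβ = 0 := by
        show γ • ((1 - x)⁻¹ * P * B) = 0
        rw [hinv, Matrix.zero_mul, Matrix.zero_mul, smul_zero]
      rw [this]
      exact ⟨fun s s' => le_refl _, fun s => by simpa using hγ0⟩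
  obtain ⟨hPβ0, hPβrow⟩ := hmain
  have hdiag : ∀ s, Pβ s s ≤ γ := fun s =>
    le_trans (Finset.single_le_sum (f := fun s' => Pβ s s')
      (fun s' _ => hPβ0 s s') (Finset.mem_univ s)) (hPβrow s)
  refine ⟨fun s => ?_, fun s => ?_, fun s => ?_, fun s => ?_⟩
  · rw [Matrix.sub_apply, Matrix.one_apply_eq]
    linarith [hdiag s]
  · rw [Matrix.sub_apply, Matrix.one_apply_eq]
    linarith [hdiag s]
  · have : ∑ s', (1 - Pβ) s s' = 1 - ∑ s', Pβ s s' := by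
      simp [Matrix.sub_apply, Finset.sum_sub_distrib, Matrix.one_apply]
    rw [this]
    linarith [hPβrow s]
  · have : ∑ s', (1 - Pβ) s s' = 1 - ∑ s', Pβ s s' := by
      simp [Matrix.sub_apply, Finset.sum_sub_distrib, Matrix.one_apply]
    rw [this]
    linarith [hPβrow s]
end

section
/- Assume additionally that β(s) > 0 for all s ∈ S. Then the matrix I − P·(I−B) is invertible, and the matrix P^β₁ = (I − P·(I−B))⁻¹·P·B has all entries nonnegative and every row sum equal to 1; that is, P^β₁ is a stochastic matrix. (This is the γ = 1 case of the transition matrix P^β.) -/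
open Matrix

attribute [local instance] Matrix.linftyOpNormedRing Matrix.linftyOpNormedAlgebra

/-- if `β(s) > 0` for all `s`, then `I − P·(I−B)` is invertible and
`P^β₁ = (I − P·(I−B))⁻¹·P·B` is a stochastic matrix (nonnegative entries, row sums 1). -/
theorem stmt_5 {S : Type*} [Fintype S] [Nonempty S] [DecidableEq S]
    (P : Matrix S S ℝ) (hP0 : ∀ s s', 0 ≤ P s s') (hP1 : ∀ s, ∑ s', P s s' = 1)
    (β : S → ℝ) (hβ0 : ∀ s, 0 ≤ β s) (hβ1 : ∀ s, β s ≤ 1)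
    (hβpos : ∀ s, 0 < β s) :
    let B := diagonal β
    let Pβ₁ := (1 - P * (1 - B))⁻¹ * P * B
    IsUnit (1 - P * (1 - B)) ∧ (∀ s s', 0 ≤ Pβ₁ s s') ∧ (∀ s, ∑ s', Pβ₁ s s' = 1) := by
  intro B Pβ₁
  haveI : CompleteSpace (Matrix S S ℝ) := FiniteDimensional.complete ℝ _
  set Q := P * (1 - B) with hQdef
  have h1B : (1 : Matrix S S ℝ) - B = diagonal (fun s => 1 - β s) := by
    rw [show B = diagonal β from rfl, ← Matrix.diagonal_one, ← Matrix.diagonal_sub]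
  have hQapp : ∀ s s', Q s s' = P s s' * (1 - β s') := by
    intro s s'
    rw [hQdef, h1B, Matrix.mul_diagonal]
  have hQ0 : ∀ s s', 0 ≤ Q s s' := fun s s' => by
    rw [hQapp]; exact mul_nonneg (hP0 s s') (by linarith [hβ1 s'])
  -- minimum of β
  obtain ⟨t, -, ht⟩ := Finset.exists_min_image Finset.univ β ⟨Classical.arbitrary S, Finset.mem_univ _⟩
  have hδ : 0 < β t := hβpos t
  have hrow : ∀ s, ∑ s', Q s s' ≤ 1 - β t := by
    intro s
    calc ∑ s', Q s s' ≤ ∑ s', P s s' * (1 - β t) := by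
          refine Finset.sum_le_sum fun s' _ => ?_
          rw [hQapp]
          exact mul_le_mul_of_nonneg_left (by linarith [ht s' (Finset.mem_univ s')]) (hP0 s s')
      _ = 1 - β t := by rw [← Finset.sum_mul, hP1 s, one_mul]
  have hnorm : ‖Q‖ < 1 := by
    rw [Matrix.linfty_opNorm_def]
    have : ((Finset.univ : Finset S).sup fun i => ∑ j, ‖Q i j‖₊ : NNReal) ≤ (⟨1 - β t, by linarith [hβ1 t]⟩ : NNReal) := by
      refine Finset.sup_le fun i _ => ?_
      apply NNReal.coe_le_coe.mp
      push_cast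
      calc (∑ j, (‖Q i j‖₊ : ℝ)) = ∑ j, Q i j := by
            refine Finset.sum_congr rfl fun j _ => ?_
            rw [coe_nnnorm, Real.norm_eq_abs, abs_of_nonneg (hQ0 i j)]
        _ ≤ 1 - β t := hrow i
    calc ((Finset.univ.sup fun i => ∑ j, ‖Q i j‖₊ : NNReal) : ℝ) ≤ 1 - β t := this
      _ < 1 := by linarith
  have hu : IsUnit (1 - Q) := isUnit_one_sub_of_norm_lt_one hnorm
  refine ⟨hu, ?_, ?_⟩
  · -- nonnegativity
    have hpow : ∀ n s s', 0 ≤ (Q ^ n) s s' := by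
      intro n
      induction n with
      | zero => intro s s'; simp [Matrix.one_apply]; split <;> norm_num
      | succ n ih =>
        intro s s'
        rw [pow_succ, Matrix.mul_apply]
        exact Finset.sum_nonneg fun t _ => mul_nonneg (ih s t) (hQ0 t s')
    have hinv : (1 - Q)⁻¹ = ∑' n : ℕ, Q ^ n := by
      rw [Matrix.nonsing_inv_eq_ringInverse, ← geom_series_eq_inverse Q hnorm]
      rfl
    have hsum : Summable (fun n : ℕ => Q ^ n) := summable_geometric_of_norm_lt_one hnorm
    have hinv0 : ∀ s s', 0 ≤ (1 - Q)⁻¹ s s' := by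
      intro s s'
      rw [hinv]
      let e : Matrix S S ℝ →ₗ[ℝ] ℝ :=
        { toFun := fun A => A s s', map_add' := fun _ _ => rfl, map_smul' := fun _ _ => rfl }
      have he : (∑' n : ℕ, Q ^ n) s s' = ∑' n : ℕ, (Q ^ n) s s' := by
        have := (LinearMap.toContinuousLinearMap e).map_tsum hsum
        exact this
      rw [he]
      exact tsum_nonneg fun n => hpow n s s'
    intro s s'
    show 0 ≤ ((1 - Q)⁻¹ * P * B) s s'
    rw [Matrix.mul_apply]
    refine Finset.sum_nonneg fun u _ => mul_nonneg ?_ ?_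
    · rw [Matrix.mul_apply]
      exact Finset.sum_nonneg fun v _ => mul_nonneg (hinv0 s v) (hP0 v u)
    · rcases eq_or_ne u s' with (rfl | h)
      · simpa [B] using hβ0 u
      · simp [B, Matrix.diagonal_apply_ne _ h]
  · -- row sums
    intro s
    have hdet : IsUnit (1 - Q).det := (Matrix.isUnit_iff_isUnit_det _).mp hu
    have key : Pβ₁ *ᵥ (fun _ => (1 : ℝ)) = fun _ => 1 := by
      have hPB : (P * B) *ᵥ (fun _ => (1 : ℝ)) = P *ᵥ β := by
        rw [← Matrix.mulVec_mulVec]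
        congr 1 with i
        simp [Matrix.mulVec, dotProduct, B, Matrix.diagonal_apply]
      have h1Q : (1 - Q) *ᵥ (fun _ => (1 : ℝ)) = P *ᵥ β := by
        ext i
        rw [Matrix.sub_mulVec, hQdef, ← Matrix.mulVec_mulVec, Matrix.sub_mulVec]
        have h1v : (1 : Matrix S S ℝ) *ᵥ (fun _ => (1 : ℝ)) = fun _ => 1 := by
          simp [Matrix.one_mulVec]
        have hBv : B *ᵥ (fun _ => (1 : ℝ)) = β := by
          ext j; simp [Matrix.mulVec, dotProduct, B, Matrix.diagonal_apply]
        rw [h1v, hBv]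
        have hPv : P *ᵥ (fun _ => (1 : ℝ)) = fun _ => 1 := by
          ext j; simp [Matrix.mulVec, dotProduct, hP1 j]
        simp [Matrix.mulVec_sub, hPv]
      show ((1 - Q)⁻¹ * P * B) *ᵥ (fun _ => (1 : ℝ)) = fun _ => 1
      rw [Matrix.mul_assoc, ← Matrix.mulVec_mulVec, hPB, ← h1Q, Matrix.mulVec_mulVec,
        Matrix.nonsing_inv_mul _ hdet, Matrix.one_mulVec]
    have := congrFun key s
    simpa [Matrix.mulVec, dotProduct] using this
end

section
/- Assume additionally that β(s) > 0 for all s ∈ S, and let d : S → ℝ satisfy d(s) > 0 for all s and, as a row vector, d·P = d (d is a stationary distribution of P up to normalization). Then the row vector with entries d(s)·β(s) satisfies (d∘β)·(I − P·(I−B))⁻¹ = d, where d∘β denotes the row vector s ↦ d(s)·β(s). -/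
open Matrix

attribute [local instance] Matrix.linftyOpNormedRing Matrix.linftyOpNormedAlgebra

/-- if `β(s) > 0` for all `s` and `d` is a positive left fixed vector
of `P` (i.e. `d·P = d`), then `(d∘β)·(I − P·(I−B))⁻¹ = d`, where `d∘β` is the row
vector `s ↦ d(s)·β(s)`. -/
theorem stmt_6 {S : Type*} [Fintype S] [Nonempty S] [DecidableEq S]
    (P : Matrix S S ℝ) (hP0 : ∀ s s', 0 ≤ P s s') (hP1 : ∀ s, ∑ s', P s s' = 1)
    (β : S → ℝ) (hβ0 : ∀ s, 0 ≤ β s) (hβ1 : ∀ s, β s ≤ 1)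
    (hβpos : ∀ s, 0 < β s)
    (d : S → ℝ) (hd : ∀ s, 0 < d s) (hdP : Matrix.vecMul d P = d) :
    Matrix.vecMul (fun s => d s * β s) (1 - P * (1 - diagonal β))⁻¹ = d := by
  set A : Matrix S S ℝ := P * (1 - diagonal β) with hA
  have hAentry : ∀ i j, A i j = P i j * (1 - β j) := by
    intro i j
    simp [hA, Matrix.mul_apply, Matrix.sub_apply, Matrix.one_apply, Matrix.diagonal_apply,
      mul_ite, Finset.sum_sub_distrib, Finset.sum_ite_eq', mul_one_sub]
  have hArow : ∀ i, ∑ j, A i j < 1 := by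
    intro i
    have h1 : ∑ j, A i j = 1 - ∑ j, P i j * β j := by
      simp_rw [hAentry, mul_one_sub, Finset.sum_sub_distrib, hP1]
    have hpos : 0 < ∑ j, P i j * β j := by
      have hex : ∃ j, 0 < P i j := by
        by_contra h
        push_neg at h
        have : ∑ j, P i j = 0 := Finset.sum_eq_zero fun j _ => le_antisymm (h j) (hP0 i j)
        rw [hP1 i] at this; norm_num at this
      obtain ⟨j, hj⟩ := hex
      exact Finset.sum_pos' (fun k _ => mul_nonneg (hP0 i k) (hβ0 k))
        ⟨j, Finset.mem_univ j, mul_pos hj (hβpos j)⟩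
    linarith [h1]
  have hnorm : ‖A‖ < 1 := by
    rw [Matrix.linfty_opNorm_def]
    have : ∀ i ∈ Finset.univ, (∑ j, ‖A i j‖₊ : NNReal) < 1 := by
      intro i _
      have hAn : ∀ j, 0 ≤ A i j := fun j => by
        rw [hAentry]; exact mul_nonneg (hP0 i j) (by linarith [hβ1 j])
      rw [← NNReal.coe_lt_coe]
      push_cast
      calc (∑ j, (‖A i j‖₊ : ℝ)) = ∑ j, A i j := by
            refine Finset.sum_congr rfl fun j _ => ?_
            rw [coe_nnnorm, Real.norm_of_nonneg (hAn j)]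
        _ < 1 := hArow i
    have := Finset.sup_lt_iff (α := NNReal) (by norm_num : (0:NNReal) < 1) |>.2 this
    exact_mod_cast this
  have hunit : IsUnit (1 - A) := (Units.oneSub A hnorm).isUnit
  have hdet : IsUnit (1 - A).det := (Matrix.isUnit_iff_isUnit_det _).1 hunit
  have hM : Matrix.vecMul d (1 - A) = fun s => d s * β s := by
    funext s
    rw [Matrix.vecMul_sub, Matrix.vecMul_one, hA, ← Matrix.vecMul_vecMul, hdP,
      Matrix.vecMul_sub, Matrix.vecMul_one, Pi.sub_apply, Pi.sub_apply,
      Matrix.vecMul_diagonal]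
    ring
  rw [← hM, Matrix.vecMul_vecMul, Matrix.mul_nonsing_inv _ hdet, Matrix.vecMul_one]
end

section
/- Assume additionally that β(s) > 0 for all s ∈ S, and let d : S → ℝ satisfy d(s) > 0 for all s and, as a row vector, d·P = d. Define P^β₁ = (I − P·(I−B))⁻¹·P·B (the γ = 1 case of P^β). Then (d∘β)·P^β₁ = d∘β, where d∘β denotes the row vector s ↦ d(s)·β(s); that is, d∘β is a left fixed vector of P^β₁, and hence (d∘β)·(I − P^β₁) = 0. -/
open Matrix

lemma inv_key {S : Type*} [Fintype S] [Nonempty S] [DecidableEq S]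
    (P : Matrix S S ℝ) (hP0 : ∀ s s', 0 ≤ P s s') (hP1 : ∀ s, ∑ s', P s s' = 1)
    (β : S → ℝ) (hβ1 : ∀ s, β s ≤ 1) (hβpos : ∀ s, 0 < β s) :
    IsUnit (1 - P * (1 - diagonal β)).det := by
  rw [isUnit_iff_ne_zero]
  intro hdet
  obtain ⟨v, hv, hv0⟩ := (Matrix.exists_mulVec_eq_zero_iff).2 hdet
  have hfix : ∀ s, v s = ∑ s', P s s' * (1 - β s') * v s' := by
    intro s
    have h := congrFun hv0 s
    simp only [Matrix.mul_sub, Matrix.mul_one, mulVec, dotProduct, Pi.zero_apply,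
      Matrix.sub_apply, Matrix.one_apply, Matrix.mul_diagonal, sub_mul, ite_mul,
      one_mul, zero_mul, Finset.sum_sub_distrib, Finset.sum_ite_eq',
      Finset.mem_univ, if_true] at h
    have h2 := sub_eq_zero.mp h
    simp only [Finset.sum_ite_eq, Finset.mem_univ, if_true] at h2
    rw [h2, ← Finset.sum_sub_distrib]
    exact Finset.sum_congr rfl (fun s' _ => by ring)
  -- max argument
  obtain ⟨s₀, _, hmax⟩ := Finset.exists_max_image Finset.univ (fun s => |v s|)
    ⟨Classical.arbitrary S, Finset.mem_univ _⟩
  have hvs0 : v s₀ ≠ 0 := by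
    intro h0
    apply hv; funext s
    have h1 := hmax s (Finset.mem_univ s)
    rw [h0, abs_zero] at h1
    exact abs_eq_zero.mp (le_antisymm h1 (abs_nonneg _))
  have habs : |v s₀| ≤ (∑ s', P s₀ s' * (1 - β s')) * |v s₀| := by
    calc |v s₀| = |∑ s', P s₀ s' * (1 - β s') * v s'| := by rw [← hfix]
    _ ≤ ∑ s', |P s₀ s' * (1 - β s') * v s'| := Finset.abs_sum_le_sum_abs _ _
    _ ≤ ∑ s', P s₀ s' * (1 - β s') * |v s₀| := by
        apply Finset.sum_le_sum; intro s' _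
        rw [abs_mul, abs_of_nonneg (mul_nonneg (hP0 _ _) (by linarith [hβ1 s']))]
        exact mul_le_mul_of_nonneg_left (hmax s' (Finset.mem_univ _))
          (mul_nonneg (hP0 _ _) (by linarith [hβ1 s']))
    _ = (∑ s', P s₀ s' * (1 - β s')) * |v s₀| := by rw [Finset.sum_mul]
  have hlt : (∑ s', P s₀ s' * (1 - β s')) < 1 := by
    have hsum : ∑ s', P s₀ s' * (1 - β s') = 1 - ∑ s', P s₀ s' * β s' := by
      simp [mul_sub, Finset.sum_sub_distrib, hP1 s₀]
    rw [hsum]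
    have : 0 < ∑ s', P s₀ s' * β s' := by
      by_contra hle
      push_neg at hle
      have hnn : ∀ s' ∈ (Finset.univ : Finset S), (0:ℝ) ≤ P s₀ s' * β s' :=
        fun t _ => mul_nonneg (hP0 _ _) (hβpos t).le
      have hs0 : ∑ s', P s₀ s' * β s' = 0 :=
        le_antisymm hle (Finset.sum_nonneg hnn)
      have hz := (Finset.sum_eq_zero_iff_of_nonneg hnn).mp hs0
      have : ∑ s', P s₀ s' = 0 := by
        apply Finset.sum_eq_zero
        intro s' _
        have := hz s' (Finset.mem_univ _)
        rcases mul_eq_zero.mp this with h | h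
        · exact h
        · exact absurd h (ne_of_gt (hβpos s'))
      rw [hP1 s₀] at this; norm_num at this
    linarith
  nlinarith [abs_pos.mpr hvs0, habs, hlt]


/-- if `β(s) > 0` for all `s` and `d·P = d` with `d > 0`, then the row
vector `d∘β` is a left fixed vector of `P^β₁ = (I − P·(I−B))⁻¹·P·B`, and hence
`(d∘β)·(I − P^β₁) = 0`. -/
theorem stmt_7 {S : Type*} [Fintype S] [Nonempty S] [DecidableEq S]
    (P : Matrix S S ℝ) (hP0 : ∀ s s', 0 ≤ P s s') (hP1 : ∀ s, ∑ s', P s s' = 1)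
    (β : S → ℝ) (hβ0 : ∀ s, 0 ≤ β s) (hβ1 : ∀ s, β s ≤ 1)
    (hβpos : ∀ s, 0 < β s)
    (d : S → ℝ) (hd : ∀ s, 0 < d s) (hdP : Matrix.vecMul d P = d) :
    let B := diagonal β
    let Pβ₁ := (1 - P * (1 - B))⁻¹ * P * B
    Matrix.vecMul (fun s => d s * β s) Pβ₁ = (fun s => d s * β s) ∧
      Matrix.vecMul (fun s => d s * β s) (1 - Pβ₁) = 0 := by
  intro B Pβ₁
  have hM : IsUnit (1 - P * (1 - B)).det := inv_key P hP0 hP1 β hβ1 hβpos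
  have h1 : Matrix.vecMul d (1 - P * (1 - B)) = (fun s => d s * β s) := by
    funext s
    rw [Matrix.vecMul_sub, ← Matrix.vecMul_vecMul, hdP, Matrix.vecMul_sub]
    simp [B, Matrix.vecMul_diagonal]
  have h2 : Matrix.vecMul (fun s => d s * β s) (1 - P * (1 - B))⁻¹ = d := by
    rw [← h1, Matrix.vecMul_vecMul, Matrix.mul_nonsing_inv _ hM, Matrix.vecMul_one]
  have key : Matrix.vecMul (fun s => d s * β s) Pβ₁ = (fun s => d s * β s) := by
    show Matrix.vecMul (fun s => d s * β s) ((1 - P * (1 - B))⁻¹ * P * B)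
      = (fun s => d s * β s)
    rw [← Matrix.vecMul_vecMul, ← Matrix.vecMul_vecMul, h2, hdP]
    funext s
    simp [B, Matrix.vecMul_diagonal]
  refine ⟨key, ?_⟩
  rw [Matrix.vecMul_sub, Matrix.vecMul_one, key, sub_self]
end

section
/- Let 0 ≤ γ < 1, and let d : S → ℝ satisfy d(s) > 0 for all s and, as a row vector, d·P = d. Then entrywise (d∘β)·P^β ≤ γ·(d∘β), where d∘β denotes the row vector s ↦ d(s)·β(s). Consequently, for every s ∈ S the s-th entry of the row vector (d∘β)·(I − P^β) is at least (1−γ)·d(s)·β(s); in particular, if β(s) > 0 for all s, then every column sum of the matrix D·B·(I − P^β) is positive, where D is the diagonal matrix with D(s,s) = d(s). -/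
open Matrix

/-- If `y = A *ᵥ y + a` with `A ≥ 0`, row sums of `A` at most `γ < 1`, and `a ≥ 0`,
then `y ≥ 0`. -/
lemma aux_nonneg_sol {S : Type*} [Fintype S] [Nonempty S]
    (A : Matrix S S ℝ) (γ : ℝ) (hγ1 : γ < 1)
    (hA0 : ∀ i j, 0 ≤ A i j) (hA1 : ∀ i, ∑ j, A i j ≤ γ)
    (a y : S → ℝ) (ha : ∀ i, 0 ≤ a i) (hy : ∀ i, y i = (A *ᵥ y) i + a i) :
    ∀ i, 0 ≤ y i := by
  by_contra h
  push_neg at h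
  obtain ⟨i₀, _, hmin⟩ := Finset.exists_min_image Finset.univ y
    ⟨Classical.arbitrary S, Finset.mem_univ _⟩
  obtain ⟨j, hj⟩ := h
  have hy0 : y i₀ < 0 := lt_of_le_of_lt (hmin j (Finset.mem_univ j)) hj
  have h1 : (∑ k, A i₀ k) * y i₀ ≤ (A *ᵥ y) i₀ := by
    rw [Finset.sum_mul]
    exact Finset.sum_le_sum fun k _ =>
      mul_le_mul_of_nonneg_left (hmin k (Finset.mem_univ k)) (hA0 i₀ k)
  have h2 : γ * y i₀ ≤ (∑ k, A i₀ k) * y i₀ :=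
    mul_le_mul_of_nonpos_right (hA1 i₀) hy0.le
  have := hy i₀
  nlinarith [ha i₀]

/-- If `A ≥ 0` with row sums at most `γ < 1`, then `1 - A` is a unit. -/
lemma aux_isUnit {S : Type*} [Fintype S] [Nonempty S] [DecidableEq S]
    (A : Matrix S S ℝ) (γ : ℝ) (hγ0 : 0 ≤ γ) (hγ1 : γ < 1)
    (hA0 : ∀ i j, 0 ≤ A i j) (hA1 : ∀ i, ∑ j, A i j ≤ γ) :
    IsUnit (1 - A) := by
  rw [← Matrix.mulVec_injective_iff_isUnit]
  intro u v huv
  set x : S → ℝ := u - v with hxdef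
  have hx : (1 - A) *ᵥ x = 0 := by
    rw [hxdef, Matrix.mulVec_sub, huv, sub_self]
  have hx' : ∀ i, x i = (A *ᵥ x) i := by
    intro i
    have := congrFun hx i
    simp only [sub_mulVec, one_mulVec, Pi.sub_apply, Pi.zero_apply] at this
    linarith
  have hxz : x = 0 := by
    obtain ⟨i₀, _, hmax⟩ := Finset.exists_max_image Finset.univ (fun i => |x i|)
      ⟨Classical.arbitrary S, Finset.mem_univ _⟩
    have hb : |x i₀| ≤ γ * |x i₀| := by
      calc |x i₀| = |(A *ᵥ x) i₀| := by rw [hx' i₀]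
        _ ≤ ∑ k, |A i₀ k * x k| := Finset.abs_sum_le_sum_abs _ _
        _ = ∑ k, A i₀ k * |x k| := by
            refine Finset.sum_congr rfl fun k _ => ?_
            rw [abs_mul, abs_of_nonneg (hA0 i₀ k)]
        _ ≤ ∑ k, A i₀ k * |x i₀| := Finset.sum_le_sum fun k _ =>
            mul_le_mul_of_nonneg_left (hmax k (Finset.mem_univ k)) (hA0 i₀ k)
        _ = (∑ k, A i₀ k) * |x i₀| := by rw [Finset.sum_mul]
        _ ≤ γ * |x i₀| := mul_le_mul_of_nonneg_right (hA1 i₀) (abs_nonneg _)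
    have hzero : |x i₀| = 0 := by nlinarith [abs_nonneg (x i₀)]
    funext i
    have hi := hmax i (Finset.mem_univ i)
    rw [hzero] at hi
    exact abs_eq_zero.mp (le_antisymm hi (abs_nonneg _))
  have : u - v = 0 := hxz
  funext i
  have := congrFun this i
  simp only [Pi.sub_apply, Pi.zero_apply] at this
  linarith

lemma aux_vecMul_smulM {S : Type*} [Fintype S] (v : S → ℝ) (a : ℝ) (M : Matrix S S ℝ) :
    v ᵥ* (a • M) = a • (v ᵥ* M) := by
  ext j
  simp only [vecMul, dotProduct, Matrix.smul_apply, Pi.smul_apply, smul_eq_mul,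
    Finset.mul_sum]
  exact Finset.sum_congr rfl fun k _ => by ring

/-- entrywise `(d∘β)·P^β ≤ γ·(d∘β)`; consequently each entry of
`(d∘β)·(I − P^β)` is at least `(1−γ)·d(s)·β(s)`, and if `β > 0` everywhere then every
column sum of `D·B·(I − P^β)` is positive. -/
theorem stmt_8 {S : Type*} [Fintype S] [Nonempty S] [DecidableEq S]
    (P : Matrix S S ℝ) (hP0 : ∀ s s', 0 ≤ P s s') (hP1 : ∀ s, ∑ s', P s s' = 1)
    (β : S → ℝ) (hβ0 : ∀ s, 0 ≤ β s) (hβ1 : ∀ s, β s ≤ 1)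
    (γ : ℝ) (hγ0 : 0 ≤ γ) (hγ1 : γ < 1)
    (d : S → ℝ) (hd : ∀ s, 0 < d s) (hdP : Matrix.vecMul d P = d) :
    let B := diagonal β
    let Pβ := γ • ((1 - γ • (P * (1 - B)))⁻¹ * P * B)
    (∀ s, Matrix.vecMul (fun s' => d s' * β s') Pβ s ≤ γ * (d s * β s)) ∧
    (∀ s, (1 - γ) * (d s * β s) ≤ Matrix.vecMul (fun s' => d s' * β s') (1 - Pβ) s) ∧
    ((∀ s, 0 < β s) → ∀ s, 0 < ∑ s', (diagonal d * B * (1 - Pβ)) s' s) := by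
  intro B Pβ
  show (∀ s, Matrix.vecMul (fun s' => d s' * β s')
        (γ • ((1 - γ • (P * (1 - diagonal β)))⁻¹ * P * diagonal β)) s ≤ γ * (d s * β s)) ∧
    (∀ s, (1 - γ) * (d s * β s) ≤ Matrix.vecMul (fun s' => d s' * β s')
        (1 - γ • ((1 - γ • (P * (1 - diagonal β)))⁻¹ * P * diagonal β)) s) ∧
    ((∀ s, 0 < β s) → ∀ s, 0 < ∑ s', (diagonal d * diagonal β *
        (1 - γ • ((1 - γ • (P * (1 - diagonal β)))⁻¹ * P * diagonal β))) s' s)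
  set A : Matrix S S ℝ := γ • (P * (1 - diagonal β)) with hA
  set M : Matrix S S ℝ := 1 - A with hM
  have hAentry : ∀ i j, A i j = γ * (P i j * (1 - β j)) := by
    intro i j
    simp only [hA, Matrix.smul_apply, Matrix.mul_sub, Matrix.mul_one, Matrix.sub_apply,
      Matrix.mul_diagonal, smul_eq_mul]
    ring
  have hA0 : ∀ i j, 0 ≤ A i j := fun i j => by
    rw [hAentry]
    have := hβ1 j
    exact mul_nonneg hγ0 (mul_nonneg (hP0 i j) (by linarith))
  have hA1 : ∀ i, ∑ j, A i j ≤ γ := by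
    intro i
    have h : ∑ j, A i j = γ * ∑ j, P i j * (1 - β j) := by
      rw [Finset.mul_sum]; exact Finset.sum_congr rfl fun j _ => hAentry i j
    have h2 : ∑ j, P i j * (1 - β j) ≤ ∑ j, P i j :=
      Finset.sum_le_sum fun j _ => by nlinarith [hP0 i j, hβ0 j]
    rw [h, hP1 i] at *
    nlinarith
  have hMunit : IsUnit M := aux_isUnit A γ hγ0 hγ1 hA0 hA1
  have hMdet : IsUnit M.det := (Matrix.isUnit_iff_isUnit_det M).mp hMunit
  have hMMinv : M * M⁻¹ = 1 := Matrix.mul_nonsing_inv M hMdet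
  -- nonnegativity of M⁻¹
  have hMinv0 : ∀ i j, 0 ≤ M⁻¹ i j := by
    intro i j
    refine aux_nonneg_sol A γ hγ1 hA0 hA1 (fun k => (1 : Matrix S S ℝ) k j)
      (fun k => M⁻¹ k j) (fun k => by simp [Matrix.one_apply]; positivity) ?_ i
    intro k
    have h1 := congrFun (congrFun hMMinv k) j
    rw [Matrix.mul_apply] at h1
    have hs : ∑ t, M k t * M⁻¹ t j
        = M⁻¹ k j - ∑ t, A k t * M⁻¹ t j := by
      simp only [hM, Matrix.sub_apply, sub_mul, Finset.sum_sub_distrib]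
      congr 1
      simp [Matrix.one_apply, ite_mul]
    rw [hs] at h1
    have : (A *ᵥ fun k => M⁻¹ k j) k = ∑ t, A k t * M⁻¹ t j := rfl
    rw [this]
    linarith
  -- vector identities
  have hdPs : ∀ s, ∑ t, d t * P t s = d s := by
    intro s
    have := congrFun hdP s
    simpa [Matrix.vecMul, dotProduct] using this
  have hdM : d ᵥ* M = fun s => d s * (1 - γ * (1 - β s)) := by
    funext s
    have hdA : (d ᵥ* A) s = γ * (1 - β s) * d s := by
      calc (d ᵥ* A) s = ∑ t, d t * A t s := rfl
        _ = ∑ t, (γ * (1 - β s)) * (d t * P t s) :=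
            Finset.sum_congr rfl fun t _ => by rw [hAentry]; ring
        _ = (γ * (1 - β s)) * ∑ t, d t * P t s := (Finset.mul_sum _ _ _).symm
        _ = γ * (1 - β s) * d s := by rw [hdPs s]
    have : d ᵥ* M = d - d ᵥ* A := by rw [hM, Matrix.vecMul_sub, Matrix.vecMul_one]
    rw [this]
    simp only [Pi.sub_apply, hdA]
    ring
  have hcMinv : (fun s => d s * (1 - γ * (1 - β s))) ᵥ* M⁻¹ = d := by
    rw [← hdM, Matrix.vecMul_vecMul, hMMinv, Matrix.vecMul_one]
  set e : S → ℝ := fun s => d s * (1 - β s) with he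
  have huMinv : (fun s' => d s' * β s') ᵥ* M⁻¹ = d - (1 - γ) • (e ᵥ* M⁻¹) := by
    have hu : (fun s' => d s' * β s')
        = (fun s => d s * (1 - γ * (1 - β s))) - (1 - γ) • e := by
      funext s; simp only [Pi.sub_apply, Pi.smul_apply, he, smul_eq_mul]; ring
    rw [hu, Matrix.sub_vecMul, Matrix.smul_vecMul, hcMinv]
  have hw0 : ∀ s, 0 ≤ (e ᵥ* M⁻¹) s := by
    intro s
    refine Finset.sum_nonneg fun t _ => mul_nonneg ?_ (hMinv0 t s)
    have := hβ1 t
    exact mul_nonneg (hd t).le (by linarith)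
  have hwPB0 : ∀ s, 0 ≤ ((e ᵥ* M⁻¹) ᵥ* (P * diagonal β)) s := by
    intro s
    refine Finset.sum_nonneg fun t _ => mul_nonneg (hw0 t) ?_
    show 0 ≤ (P * diagonal β) t s
    rw [Matrix.mul_diagonal]
    exact mul_nonneg (hP0 t s) (hβ0 s)
  have hdPB : d ᵥ* (P * diagonal β) = fun s => d s * β s := by
    rw [← Matrix.vecMul_vecMul, hdP]
    funext s
    rw [Matrix.vecMul_diagonal]
  -- the main vector identity
  have hvec : (fun s' => d s' * β s') ᵥ* (γ • (M⁻¹ * (P * diagonal β)))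
      = γ • ((fun s => d s * β s)
          - (1 - γ) • ((e ᵥ* M⁻¹) ᵥ* (P * diagonal β))) := by
    rw [aux_vecMul_smulM, ← Matrix.vecMul_vecMul, huMinv, Matrix.sub_vecMul,
      Matrix.smul_vecMul, hdPB]
  have h1 : ∀ s, ((fun s' => d s' * β s') ᵥ* (γ • (M⁻¹ * P * diagonal β))) s
      ≤ γ * (d s * β s) := by
    intro s
    rw [Matrix.mul_assoc, hvec]
    simp only [Pi.smul_apply, Pi.sub_apply, smul_eq_mul]
    have hnn : 0 ≤ γ * ((1 - γ) * ((e ᵥ* M⁻¹ ᵥ* (P * diagonal β)) s)) :=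
      mul_nonneg hγ0 (mul_nonneg (by linarith) (hwPB0 s))
    nlinarith [hnn]
  have h2 : ∀ s, (1 - γ) * (d s * β s)
      ≤ ((fun s' => d s' * β s') ᵥ* (1 - γ • (M⁻¹ * P * diagonal β))) s := by
    intro s
    rw [Matrix.vecMul_sub, Matrix.vecMul_one]
    have := h1 s
    simp only [Pi.sub_apply]
    nlinarith
  refine ⟨h1, h2, ?_⟩
  intro hβpos s
  have hsum : ∑ s', (diagonal d * diagonal β * (1 - γ • (M⁻¹ * P * diagonal β))) s' s
      = ((fun s' => d s' * β s') ᵥ* (1 - γ • (M⁻¹ * P * diagonal β))) s := by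
    refine Finset.sum_congr rfl fun t _ => ?_
    rw [Matrix.diagonal_mul_diagonal, Matrix.diagonal_mul]
  rw [hsum]
  have := h2 s
  have hpos : 0 < (1 - γ) * (d s * β s) :=
    mul_pos (by linarith) (mul_pos (hd s) (hβpos s))
  linarith
end

section
/- Let 0 ≤ γ < 1, assume β(s) > 0 for all s ∈ S, and let d : S → ℝ satisfy d(s) > 0 for all s and, as a row vector, d·P = d. Let D be the diagonal matrix with D(s,s) = d(s). Then the matrix M = D·B·(I − P^β) satisfies xᵀ·M·x > 0 for every nonzero x ∈ ℝ^S; equivalently, the symmetric matrix M + Mᵀ is positive definite. -/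
open Matrix
open scoped NNReal

attribute [local instance] Matrix.linftyOpNormedRing Matrix.linftyOpNormedAlgebra

namespace Stmt9Aux

variable {S : Type*} [Fintype S] [DecidableEq S]

lemma pow_entry_nonneg (N : Matrix S S ℝ) (hN : ∀ i j, 0 ≤ N i j) (n : ℕ) (i j : S) :
    0 ≤ (N ^ n) i j := by
  induction n generalizing i j with
  | zero =>
    rw [pow_zero, Matrix.one_apply]
    split <;> norm_num
  | succ n ih =>
    rw [pow_succ, Matrix.mul_apply]
    exact Finset.sum_nonneg fun k _ => mul_nonneg (ih i k) (hN k j)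

lemma norm_lt_one (N : Matrix S S ℝ) (hN : ∀ i j, 0 ≤ N i j) {γ : ℝ}
    (hγ : γ < 1) (hrow : ∀ i, ∑ j, N i j ≤ γ) : ‖N‖ < 1 := by
  rw [Matrix.linfty_opNorm_def]
  have h : ((Finset.univ : Finset S).sup fun i => ∑ j, ‖N i j‖₊) < (1 : ℝ≥0) := by
    refine Finset.sup_lt_iff (by norm_num) |>.mpr fun i _ => ?_
    have h2 : ((∑ j, ‖N i j‖₊ : ℝ≥0) : ℝ) < 1 := by
      push_cast
      have he : ∀ j ∈ Finset.univ, ‖N i j‖ = N i j := fun j _ => by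
        rw [Real.norm_eq_abs, abs_of_nonneg (hN i j)]
      rw [Finset.sum_congr rfl he]
      exact lt_of_le_of_lt (hrow i) hγ
    exact_mod_cast h2
  exact_mod_cast h

lemma inv_entry_nonneg (N : Matrix S S ℝ) (hnorm : ‖N‖ < 1)
    (hN : ∀ i j, 0 ≤ N i j) (i j : S) : 0 ≤ (1 - N)⁻¹ i j := by
  have hs : HasSum (fun n : ℕ => N ^ n) (Ring.inverse (1 - N)) :=
    hasSum_geom_series_inverse N hnorm
  have hE : Continuous (Matrix.entryLinearMap ℝ ℝ i j : Matrix S S ℝ →ₗ[ℝ] ℝ) :=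
    LinearMap.continuous_of_finiteDimensional _
  have h2 := hs.map (Matrix.entryLinearMap ℝ ℝ i j) hE
  rw [Matrix.nonsing_inv_eq_ringInverse]
  exact h2.nonneg fun n => pow_entry_nonneg N hN n i j

end Stmt9Aux

/-- with `β > 0` everywhere and `d` a positive left fixed vector of `P`,
the matrix `M = D·B·(I − P^β)` satisfies `xᵀ·M·x > 0` for every nonzero `x`;
equivalently, `M + Mᵀ` is positive definite. -/
theorem stmt_9 {S : Type*} [Fintype S] [Nonempty S] [DecidableEq S]
    (P : Matrix S S ℝ) (hP0 : ∀ s s', 0 ≤ P s s') (hP1 : ∀ s, ∑ s', P s s' = 1)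
    (β : S → ℝ) (hβ0 : ∀ s, 0 ≤ β s) (hβ1 : ∀ s, β s ≤ 1)
    (γ : ℝ) (hγ0 : 0 ≤ γ) (hγ1 : γ < 1) (hβpos : ∀ s, 0 < β s)
    (d : S → ℝ) (hd : ∀ s, 0 < d s) (hdP : Matrix.vecMul d P = d) :
    let B := diagonal β
    let Pβ := γ • ((1 - γ • (P * (1 - B)))⁻¹ * P * B)
    let M := diagonal d * B * (1 - Pβ)
    (∀ x : S → ℝ, x ≠ 0 → 0 < x ⬝ᵥ M.mulVec x) ∧ (M + Mᵀ).PosDef := by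
  intro B Pβ M
  have hB : B = diagonal β := rfl
  have hPβdef : Pβ = γ • ((1 - γ • (P * (1 - B)))⁻¹ * P * B) := rfl
  have hM : M = diagonal d * B * (1 - Pβ) := rfl
  set N : Matrix S S ℝ := γ • (P * (1 - B)) with hN_def
  -- basic facts about N
  have hB1 : (1 : Matrix S S ℝ) - B = diagonal (fun s => (1:ℝ) - β s) := by
    rw [hB, ← diagonal_one, diagonal_sub]
  have hNe : ∀ i j, N i j = γ * (P i j * (1 - β j)) := by
    intro i j
    rw [hN_def, Matrix.smul_apply, hB1, Matrix.mul_diagonal, smul_eq_mul]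
  have hNentry : ∀ i j, 0 ≤ N i j := by
    intro i j
    rw [hNe]
    exact mul_nonneg hγ0 (mul_nonneg (hP0 i j) (by linarith [hβ1 j]))
  have hNrow : ∀ i, ∑ j, N i j ≤ γ := by
    intro i
    calc ∑ j, N i j = γ * ∑ j, P i j * (1 - β j) := by
          rw [Finset.mul_sum]; exact Finset.sum_congr rfl fun j _ => hNe i j
      _ ≤ γ * ∑ j, P i j := by
          refine mul_le_mul_of_nonneg_left (Finset.sum_le_sum fun j _ => ?_) hγ0
          exact mul_le_of_le_one_right (hP0 i j) (by linarith [hβ0 j])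
      _ = γ := by rw [hP1 i, mul_one]
  have hnorm : ‖N‖ < 1 := Stmt9Aux.norm_lt_one N hNentry hγ1 hNrow
  have hUnit : IsUnit (1 - N) := isUnit_one_sub_of_norm_lt_one hnorm
  have hdet : IsUnit (1 - N).det := (Matrix.isUnit_iff_isUnit_det _).mp hUnit
  have hAinv : ∀ i j, 0 ≤ (1 - N)⁻¹ i j := Stmt9Aux.inv_entry_nonneg N hnorm hNentry
  have hmul : (1 - N) * (1 - N)⁻¹ = 1 := Matrix.mul_nonsing_inv _ hdet
  have hmul' : (1 - N)⁻¹ * (1 - N) = 1 := Matrix.nonsing_inv_mul _ hdet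
  -- weights
  set w : S → ℝ := fun s => d s * β s with hw_def
  have hw0 : ∀ s, 0 < w s := fun s => mul_pos (hd s) (hβpos s)
  -- entries of Pβ are nonnegative
  have hQ0 : ∀ i j, 0 ≤ Pβ i j := by
    intro i j
    have he : Pβ i j = γ * (((1 - N)⁻¹ * P) i j * β j) := by
      rw [hPβdef, hB, Matrix.smul_apply, Matrix.mul_diagonal, smul_eq_mul]
    rw [he, Matrix.mul_apply]
    exact mul_nonneg hγ0 (mul_nonneg
      (Finset.sum_nonneg fun k _ => mul_nonneg (hAinv i k) (hP0 k j)) (hβ0 j))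
  -- row sums of Pβ are at most γ
  have honeP : P *ᵥ (fun _ => (1:ℝ)) = fun _ => 1 := by
    funext i
    simp only [Matrix.mulVec, dotProduct, mul_one]
    exact hP1 i
  set r : S → ℝ := (1 - N)⁻¹ *ᵥ (fun _ => 1) with hr_def
  have hr0 : ∀ i, 0 ≤ r i := by
    intro i
    have : r i = ∑ k, (1 - N)⁻¹ i k * 1 := rfl
    rw [this]
    exact Finset.sum_nonneg fun k _ => mul_nonneg (hAinv i k) one_pos.le
  have hAr : (1 - N) *ᵥ r = fun _ => 1 := by
    rw [hr_def, Matrix.mulVec_mulVec, hmul, Matrix.one_mulVec]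
  have hr1 : ∀ i, 1 ≤ r i := by
    intro i
    have h := congrFun hAr i
    rw [Matrix.sub_mulVec, Matrix.one_mulVec] at h
    have h2 : r i - (N *ᵥ r) i = 1 := h
    have hNr : 0 ≤ (N *ᵥ r) i := by
      have : (N *ᵥ r) i = ∑ k, N i k * r k := rfl
      rw [this]
      exact Finset.sum_nonneg fun k _ => mul_nonneg (hNentry i k) (hr0 k)
    linarith
  have hBv : B *ᵥ (fun _ => (1:ℝ)) = β := by
    funext i
    rw [hB, Matrix.mulVec_diagonal, mul_one]
  have hkey : γ • (P *ᵥ β) = (1 - N) *ᵥ (fun _ => 1) - (1 - γ) • (fun _ => (1:ℝ)) := by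
    have hN1 : N *ᵥ (fun _ => (1:ℝ)) = γ • (fun _ => (1:ℝ)) - γ • (P *ᵥ β) := by
      rw [hN_def, Matrix.smul_mulVec, ← Matrix.mulVec_mulVec, hB1]
      have : diagonal (fun s => (1:ℝ) - β s) *ᵥ (fun _ => 1) = (fun _ => (1:ℝ)) - β := by
        funext i
        rw [Matrix.mulVec_diagonal, mul_one]
        rfl
      rw [this, Matrix.mulVec_sub, honeP, smul_sub]
    rw [Matrix.sub_mulVec, Matrix.one_mulVec, hN1]
    funext i
    simp only [Pi.sub_apply, Pi.smul_apply, smul_eq_mul]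
    ring
  have hPβ1 : Pβ *ᵥ (fun _ => 1) = (fun _ => (1:ℝ)) - (1 - γ) • r := by
    have h1 : Pβ *ᵥ (fun _ => 1) = γ • ((1 - N)⁻¹ *ᵥ (P *ᵥ (B *ᵥ (fun _ => 1)))) := by
      rw [hPβdef, Matrix.smul_mulVec, ← Matrix.mulVec_mulVec, ← Matrix.mulVec_mulVec]
    rw [h1, hBv, ← Matrix.mulVec_smul, hkey, Matrix.mulVec_sub, Matrix.mulVec_mulVec, hmul',
      Matrix.one_mulVec, Matrix.mulVec_smul, ← hr_def]
  have hQrow : ∀ i, ∑ j, Pβ i j ≤ γ := by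
    intro i
    have h := congrFun hPβ1 i
    have hl : (Pβ *ᵥ fun _ => (1:ℝ)) i = ∑ j, Pβ i j := by
      simp only [Matrix.mulVec, dotProduct, mul_one]
    rw [hl] at h
    simp only [Pi.sub_apply, Pi.smul_apply, smul_eq_mul] at h
    have := hr1 i
    nlinarith
  -- column sums
  have hdB : d ᵥ* B = w := by
    funext j
    rw [hB, Matrix.vecMul_diagonal]
  have hdN : d ᵥ* N = γ • d - γ • w := by
    rw [hN_def]
    have h1 : d ᵥ* (γ • (P * (1 - B))) = γ • (d ᵥ* (P * (1 - B))) := by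
      funext j
      simp only [Matrix.vecMul, dotProduct, Matrix.smul_apply, smul_eq_mul,
        Pi.smul_apply, Finset.mul_sum]
      exact Finset.sum_congr rfl fun k _ => by ring
    rw [h1, ← Matrix.vecMul_vecMul, hdP, Matrix.vecMul_sub, Matrix.vecMul_one, hdB, smul_sub]
  have hdA : d ᵥ* (1 - N) = (1 - γ) • d + γ • w := by
    rw [Matrix.vecMul_sub, Matrix.vecMul_one, hdN]
    funext j
    simp only [Pi.sub_apply, Pi.add_apply, Pi.smul_apply, smul_eq_mul]
    ring
  set u : S → ℝ := d ᵥ* (1 - N)⁻¹ with hu_def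
  set v : S → ℝ := w ᵥ* (1 - N)⁻¹ with hv_def
  have hu0 : ∀ j, 0 ≤ u j := by
    intro j
    have : u j = ∑ i, d i * (1 - N)⁻¹ i j := rfl
    rw [this]
    exact Finset.sum_nonneg fun i _ => mul_nonneg (hd i).le (hAinv i j)
  have hdecomp : (1 - γ) • u + γ • v = d := by
    have h1 : ((1 - γ) • d + γ • w) ᵥ* (1 - N)⁻¹ = (1 - γ) • u + γ • v := by
      rw [Matrix.add_vecMul, Matrix.smul_vecMul, Matrix.smul_vecMul, hu_def, hv_def]
    rw [← h1, ← hdA, Matrix.vecMul_vecMul, hmul, Matrix.vecMul_one]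
  have hcol : ∀ j, ∑ i, w i * Pβ i j ≤ w j := by
    intro j
    have h1 : w ᵥ* Pβ = γ • (v ᵥ* (P * B)) := by
      rw [hPβdef]
      have h2 : w ᵥ* (γ • ((1 - N)⁻¹ * P * B)) = γ • (w ᵥ* ((1 - N)⁻¹ * P * B)) := by
        funext j'
        simp only [Matrix.vecMul, dotProduct, Matrix.smul_apply, smul_eq_mul,
          Pi.smul_apply, Finset.mul_sum]
        exact Finset.sum_congr rfl fun k _ => by ring
      rw [h2, mul_assoc, ← Matrix.vecMul_vecMul, ← hv_def]
    have h3 : γ • (v ᵥ* (P * B)) = (γ • v) ᵥ* (P * B) := (Matrix.smul_vecMul _ _ _).symm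
    have h4 : (γ • v : S → ℝ) = d - (1 - γ) • u := by
      rw [← hdecomp]; funext j'; simp only [Pi.add_apply, Pi.sub_apply, Pi.smul_apply,
        smul_eq_mul]; ring
    have h5 : d ᵥ* (P * B) = w := by
      rw [← Matrix.vecMul_vecMul, hdP, hdB]
    have h6 : w ᵥ* Pβ = w - (1 - γ) • (u ᵥ* (P * B)) := by
      rw [h1, h3, h4, Matrix.sub_vecMul, h5, Matrix.smul_vecMul]
    have h7 : 0 ≤ (u ᵥ* (P * B)) j := by
      have he : (u ᵥ* (P * B)) j = ∑ i, u i * (P i j * β j) := by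
        simp only [Matrix.vecMul, dotProduct]
        exact Finset.sum_congr rfl fun i _ => by rw [hB, Matrix.mul_diagonal]
      rw [he]
      exact Finset.sum_nonneg fun i _ =>
        mul_nonneg (hu0 i) (mul_nonneg (hP0 i j) (hβ0 j))
    have h8 : (w ᵥ* Pβ) j = ∑ i, w i * Pβ i j := rfl
    have h9 := congrFun h6 j
    rw [h8] at h9
    have h10 : (w - (1 - γ) • (u ᵥ* (P * B))) j = w j - (1 - γ) * (u ᵥ* (P * B)) j := rfl
    rw [h10] at h9
    nlinarith
  -- entries of M
  have hMentry : ∀ i j, M i j = w i * ((1 : Matrix S S ℝ) i j - Pβ i j) := by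
    intro i j
    rw [hM, hB, Matrix.diagonal_mul_diagonal, Matrix.diagonal_mul, Matrix.sub_apply]
  -- the quadratic form
  have hquad : ∀ x : S → ℝ, x ≠ 0 → 0 < x ⬝ᵥ M.mulVec x := by
    intro x hx
    obtain ⟨i₀, hi₀⟩ : ∃ i, x i ≠ 0 := by
      by_contra h
      push_neg at h
      exact hx (funext fun i => h i)
    set W := ∑ i, w i * x i ^ 2 with hW_def
    set T := ∑ i, ∑ j, w i * Pβ i j * x i * x j with hT_def
    have hW0 : 0 < W := by
      refine Finset.sum_pos' (fun i _ => mul_nonneg (hw0 i).le (sq_nonneg _)) ⟨i₀,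
        Finset.mem_univ _, ?_⟩
      exact mul_pos (hw0 i₀) ((sq_nonneg _).lt_of_ne (Ne.symm (pow_ne_zero 2 hi₀)))
    have hxM : x ⬝ᵥ M.mulVec x = W - T := by
      have h1 : x ⬝ᵥ M.mulVec x = ∑ i, ∑ j, x i * (M i j * x j) := by
        simp only [dotProduct, Matrix.mulVec, Finset.mul_sum]
      rw [h1]
      have h2 : ∀ i, ∑ j, x i * (M i j * x j)
          = w i * x i ^ 2 - ∑ j, w i * Pβ i j * x i * x j := by
        intro i
        have h3 : ∀ j, x i * (M i j * x j)
            = x i * (w i * (1 : Matrix S S ℝ) i j * x j) - w i * Pβ i j * x i * x j := by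
          intro j
          rw [hMentry]
          ring
        rw [Finset.sum_congr rfl fun j _ => h3 j, Finset.sum_sub_distrib]
        congr 1
        have h4 : ∀ j, x i * (w i * (1 : Matrix S S ℝ) i j * x j)
            = if i = j then w i * x i ^ 2 else 0 := by
          intro j
          by_cases hij : i = j
          · subst hij; simp [Matrix.one_apply_eq]; ring
          · simp [Matrix.one_apply_ne hij, hij]
        rw [Finset.sum_congr rfl fun j _ => h4 j, Finset.sum_ite_eq]
        simp
      rw [Finset.sum_congr rfl fun i _ => h2 i, Finset.sum_sub_distrib, hW_def, hT_def]
    set T1 := ∑ i, ∑ j, w i * Pβ i j * x i ^ 2 with hT1_def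
    set T2 := ∑ i, ∑ j, w i * Pβ i j * x j ^ 2 with hT2_def
    have h2T : 2 * T ≤ T1 + T2 := by
      have hp : ∀ i j, 2 * (w i * Pβ i j * x i * x j)
          ≤ w i * Pβ i j * x i ^ 2 + w i * Pβ i j * x j ^ 2 := by
        intro i j
        have ha : 0 ≤ w i * Pβ i j := mul_nonneg (hw0 i).le (hQ0 i j)
        nlinarith [sq_nonneg (x i - x j)]
      calc 2 * T = ∑ i, ∑ j, 2 * (w i * Pβ i j * x i * x j) := by
            rw [hT_def, Finset.mul_sum]
            exact Finset.sum_congr rfl fun i _ => Finset.mul_sum _ _ _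
        _ ≤ ∑ i, ∑ j, (w i * Pβ i j * x i ^ 2 + w i * Pβ i j * x j ^ 2) :=
            Finset.sum_le_sum fun i _ => Finset.sum_le_sum fun j _ => hp i j
        _ = T1 + T2 := by
            rw [hT1_def, hT2_def, ← Finset.sum_add_distrib]
            exact Finset.sum_congr rfl fun i _ => Finset.sum_add_distrib
    have hT1 : T1 ≤ γ * W := by
      have h1 : ∀ i, ∑ j, w i * Pβ i j * x i ^ 2 = (w i * x i ^ 2) * ∑ j, Pβ i j := by
        intro i
        rw [Finset.mul_sum]
        exact Finset.sum_congr rfl fun j _ => by ring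
      calc T1 = ∑ i, (w i * x i ^ 2) * ∑ j, Pβ i j :=
            Finset.sum_congr rfl fun i _ => h1 i
        _ ≤ ∑ i, (w i * x i ^ 2) * γ := Finset.sum_le_sum fun i _ =>
            mul_le_mul_of_nonneg_left (hQrow i) (mul_nonneg (hw0 i).le (sq_nonneg _))
        _ = γ * W := by rw [hW_def, Finset.sum_mul (Finset.univ) _ γ |>.symm, mul_comm]
    have hT2 : T2 ≤ W := by
      have h1 : T2 = ∑ j, x j ^ 2 * ∑ i, w i * Pβ i j := by
        rw [hT2_def, Finset.sum_comm]
        exact Finset.sum_congr rfl fun j _ => by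
          rw [Finset.mul_sum]
          exact Finset.sum_congr rfl fun i _ => by ring
      calc T2 = ∑ j, x j ^ 2 * ∑ i, w i * Pβ i j := h1
        _ ≤ ∑ j, x j ^ 2 * w j := Finset.sum_le_sum fun j _ =>
            mul_le_mul_of_nonneg_left (hcol j) (sq_nonneg _)
        _ = W := Finset.sum_congr rfl fun j _ => by ring
    have hfin : 0 < W - T := by nlinarith [mul_pos (show (0:ℝ) < 1 - γ by linarith) hW0]
    rw [hxM]
    exact hfin
  refine ⟨hquad, Matrix.PosDef.of_dotProduct_mulVec_pos (Matrix.isHermitian_add_transpose_self M) ?_⟩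
  intro x hx
  have hq := hquad x hx
  have hs : star x ⬝ᵥ (M + Mᵀ) *ᵥ x = 2 * (x ⬝ᵥ M.mulVec x) := by
    rw [star_trivial, Matrix.add_mulVec, dotProduct_add, Matrix.mulVec_transpose,
      dotProduct_comm x (x ᵥ* M), ← Matrix.dotProduct_mulVec, two_mul]
  rw [hs]
  linarith
end

section
/- Let 0 ≤ γ < 1, assume β(s) > 0 for all s ∈ S, and let d : S → ℝ satisfy d(s) > 0 for all s and, as a row vector, d·P = d. Let D be the diagonal matrix with D(s,s) = d(s), and let Φ : Matrix S (Fin k) ℝ have linearly independent columns (full column rank). Then the k×k matrix A = Φᵀ·D·B·(I − P^β)·Φ satisfies wᵀ·A·w > 0 for every nonzero w ∈ ℝ^k; in particular, A is invertible. -/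
open Matrix

lemma mmat_nonneg {S : Type*} [Fintype S] [Nonempty S] [DecidableEq S]
    (Q : Matrix S S ℝ) (hQ0 : ∀ i j, 0 ≤ Q i j) (hQ1 : ∀ i, ∑ j, Q i j ≤ 1)
    {γ : ℝ} (hγ0 : 0 ≤ γ) (hγ1 : γ < 1)
    (x : S → ℝ) (hy : ∀ i, 0 ≤ ((1 - γ • Q) *ᵥ x) i) : ∀ i, 0 ≤ x i := by
  obtain ⟨i₀, hi₀⟩ := Finite.exists_min x
  have key : 0 ≤ x i₀ := by
    by_contra h
    push_neg at h
    have hy0 := hy i₀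
    have hmv : ((1 - γ • Q) *ᵥ x) i₀ = x i₀ - γ * ∑ j, Q i₀ j * x j := by
      simp [Matrix.mulVec, dotProduct, Matrix.sub_apply, Matrix.smul_apply,
        Matrix.one_apply, sub_mul, ite_mul, Finset.sum_sub_distrib, Finset.sum_ite_eq,
        Finset.mul_sum, smul_eq_mul, mul_assoc]
    have hsum : (∑ j, Q i₀ j) * x i₀ ≤ ∑ j, Q i₀ j * x j := by
      rw [Finset.sum_mul]
      exact Finset.sum_le_sum fun j _ => mul_le_mul_of_nonneg_left (hi₀ j) (hQ0 i₀ j)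
    have h2 : x i₀ ≤ (∑ j, Q i₀ j) * x i₀ := by nlinarith [hQ1 i₀]
    have h3 : γ * x i₀ ≤ γ * ∑ j, Q i₀ j * x j :=
      mul_le_mul_of_nonneg_left (h2.trans hsum) hγ0
    rw [hmv] at hy0
    nlinarith
  exact fun i => key.trans (hi₀ i)

lemma mmat_unit {S : Type*} [Fintype S] [Nonempty S] [DecidableEq S]
    (Q : Matrix S S ℝ) (hQ0 : ∀ i j, 0 ≤ Q i j) (hQ1 : ∀ i, ∑ j, Q i j ≤ 1)
    {γ : ℝ} (hγ0 : 0 ≤ γ) (hγ1 : γ < 1) : IsUnit ((1 - γ • Q).det) := by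
  rw [isUnit_iff_ne_zero]
  intro h
  obtain ⟨v, hv, hmv⟩ := (Matrix.exists_mulVec_eq_zero_iff).2 h
  have h1 : ∀ i, 0 ≤ v i := mmat_nonneg Q hQ0 hQ1 hγ0 hγ1 v (by simp [hmv])
  have h2 : ∀ i, 0 ≤ -v i := by
    refine mmat_nonneg Q hQ0 hQ1 hγ0 hγ1 (-v) ?_
    intro i
    rw [Matrix.mulVec_neg, hmv]
    simp
  exact hv (funext fun i => le_antisymm (by simpa using h2 i) (h1 i))

/-- if `Φ` has linearly independent columns, then the key matrix
`A = Φᵀ·D·B·(I − P^β)·Φ` satisfies `wᵀ·A·w > 0` for all nonzero `w`; in particular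
`A` is invertible. -/
theorem stmt_10 {S : Type*} [Fintype S] [Nonempty S] [DecidableEq S]
    (P : Matrix S S ℝ) (hP0 : ∀ s s', 0 ≤ P s s') (hP1 : ∀ s, ∑ s', P s s' = 1)
    (β : S → ℝ) (hβ0 : ∀ s, 0 ≤ β s) (hβ1 : ∀ s, β s ≤ 1)
    (γ : ℝ) (hγ0 : 0 ≤ γ) (hγ1 : γ < 1) (hβpos : ∀ s, 0 < β s)
    (d : S → ℝ) (hd : ∀ s, 0 < d s) (hdP : Matrix.vecMul d P = d)
    (k : ℕ) (hk : 0 < k) (Φ : Matrix S (Fin k) ℝ)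
    (hΦ : LinearIndependent ℝ (fun j : Fin k => (Φ.transpose j))) :
    let B := diagonal β
    let Pβ := γ • ((1 - γ • (P * (1 - B)))⁻¹ * P * B)
    let A := Φᵀ * diagonal d * B * (1 - Pβ) * Φ
    (∀ w : Fin k → ℝ, w ≠ 0 → 0 < w ⬝ᵥ A.mulVec w) ∧ IsUnit A := by
  intro B Pβ A
  set Q : Matrix S S ℝ := P * (1 - B) with hQdef
  have hQeq : Q = P - P * B := by rw [hQdef, Matrix.mul_sub, Matrix.mul_one]
  have hQapp : ∀ i j, Q i j = P i j * (1 - β j) := by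
    intro i j
    rw [hQeq]
    simp only [Matrix.sub_apply, B, Matrix.mul_diagonal]
    ring
  have hQ0 : ∀ i j, 0 ≤ Q i j := fun i j => by
    rw [hQapp]; exact mul_nonneg (hP0 i j) (by linarith [hβ1 j])
  have hQ1 : ∀ i, ∑ j, Q i j ≤ 1 := by
    intro i
    calc ∑ j, Q i j ≤ ∑ j, P i j :=
          Finset.sum_le_sum fun j _ => by
            rw [hQapp]
            nlinarith [hP0 i j, hβ0 j, hβ1 j]
      _ = 1 := hP1 i
  set M : Matrix S S ℝ := 1 - γ • Q with hMdef
  have hMdet : IsUnit M.det := mmat_unit Q hQ0 hQ1 hγ0 hγ1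
  set R : Matrix S S ℝ := M⁻¹ with hRdef
  have hMR : M * R = 1 := Matrix.mul_nonsing_inv _ hMdet
  have hRM : R * M = 1 := Matrix.nonsing_inv_mul _ hMdet
  have hPβdef : Pβ = γ • (R * P * B) := rfl
  -- R is entrywise nonnegative
  have hR0 : ∀ i j, 0 ≤ R i j := by
    intro i j
    refine mmat_nonneg Q hQ0 hQ1 hγ0 hγ1 (fun t => R t j) ?_ i
    intro i'
    have h : ((1 - γ • Q) *ᵥ fun t => R t j) i' = (M * R) i' j := by
      rw [← hMdef]
      simp [Matrix.mulVec, Matrix.mul_apply, dotProduct]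
    rw [h, hMR]
    by_cases h : i' = j <;> simp [Matrix.one_apply, h]
  -- u := R *ᵥ 1 satisfies u ≥ 1
  set u : S → ℝ := R *ᵥ (fun _ => 1) with hudef
  have hMu : M *ᵥ u = fun _ => (1:ℝ) := by
    rw [hudef, Matrix.mulVec_mulVec, hMR, Matrix.one_mulVec]
  have hu1 : ∀ s, 1 ≤ u s := by
    intro s
    have h := mmat_nonneg Q hQ0 hQ1 hγ0 hγ1 (fun t => u t - 1) ?_ s
    · linarith
    intro i
    have hexp : ((1 - γ • Q) *ᵥ fun t => u t - 1) i
        = (M *ᵥ u) i - (M *ᵥ fun _ => (1:ℝ)) i := by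
      rw [← hMdef, show (fun t => u t - 1) = u - fun _ => (1:ℝ) from rfl,
        Matrix.mulVec_sub]
      rfl
    rw [hexp, hMu]
    have hM1 : (M *ᵥ fun _ => (1:ℝ)) i = 1 - γ * ∑ j, Q i j := by
      rw [hMdef]
      simp [Matrix.mulVec, dotProduct, Matrix.sub_apply, Matrix.smul_apply,
        Matrix.one_apply, sub_mul, ite_mul, Finset.sum_sub_distrib, Finset.sum_ite_eq,
        Finset.mul_sum, smul_eq_mul]
    rw [hM1]
    have h1 : 0 ≤ ∑ j, Q i j := Finset.sum_nonneg fun j _ => hQ0 i j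
    have h2 := mul_nonneg hγ0 h1
    simp only
    linarith
  -- entrywise nonnegativity of Pβ
  have hPβapp : ∀ s s', Pβ s s' = γ * ((∑ t, R s t * P t s') * β s') := by
    intro s s'
    rw [hPβdef]
    rw [Matrix.smul_apply, smul_eq_mul]
    congr 1
    rw [show B = diagonal β from rfl, Matrix.mul_diagonal, Matrix.mul_apply]
  have hPβ0 : ∀ s s', 0 ≤ Pβ s s' := by
    intro s s'
    rw [hPβapp]
    exact mul_nonneg hγ0 (mul_nonneg (Finset.sum_nonneg fun t _ =>
      mul_nonneg (hR0 s t) (hP0 t s')) (hβ0 s'))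
  -- row sums of Pβ are at most γ
  have hP1' : P *ᵥ (fun _ => (1:ℝ)) = fun _ => 1 := by
    funext s
    simp [Matrix.mulVec, dotProduct, hP1 s]
  have hB1 : B *ᵥ (fun _ => (1:ℝ)) = β := by
    funext s
    simp [B, Matrix.mulVec_diagonal]
  have hPb : P *ᵥ β = (fun _ => (1:ℝ)) - Q *ᵥ (fun _ => 1) := by
    have h : Q *ᵥ (fun _ => (1:ℝ)) = P *ᵥ (fun _ => 1) - (P * B) *ᵥ (fun _ => 1) := by
      rw [hQeq, Matrix.sub_mulVec]
    rw [h, ← Matrix.mulVec_mulVec, hB1, hP1']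
    abel
  have hRQ : γ • ((R * Q) *ᵥ (fun _ => (1:ℝ))) = u - fun _ => 1 := by
    have h1 : R - γ • (R * Q) = 1 := by
      have h := hRM
      rw [hMdef, Matrix.mul_sub, Matrix.mul_one, Matrix.mul_smul] at h
      exact h
    have h2 : γ • (R * Q) = R - 1 := by rw [← h1]; abel
    rw [← Matrix.smul_mulVec, h2, Matrix.sub_mulVec, Matrix.one_mulVec, ← hudef]
  have hrowId : Pβ *ᵥ (fun _ => (1:ℝ)) = fun s => 1 - (1 - γ) * u s := by
    rw [hPβdef, Matrix.smul_mulVec, ← Matrix.mulVec_mulVec, hB1,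
      ← Matrix.mulVec_mulVec, hPb, Matrix.mulVec_sub, Matrix.mulVec_mulVec, smul_sub, hRQ,
      ← hudef]
    funext s
    simp only [Pi.sub_apply, Pi.smul_apply, smul_eq_mul]
    ring
  have hrow : ∀ s, ∑ s', Pβ s s' ≤ γ := by
    intro s
    have h1 : (Pβ *ᵥ (fun _ => (1:ℝ))) s = ∑ s', Pβ s s' := by
      simp [Matrix.mulVec, dotProduct]
    rw [← h1, hrowId]
    show 1 - (1 - γ) * u s ≤ γ
    have := hu1 s
    nlinarith
  -- weighted column sums: μᵀ Pβ ≤ μᵀ with μ = d * β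
  set μ : S → ℝ := fun s => d s * β s with hμdef
  have hμpos : ∀ s, 0 < μ s := fun s => mul_pos (hd s) (hβpos s)
  have hdM : d ᵥ* M = fun i => (1 - γ) * d i + γ * μ i := by
    have hdQ : d ᵥ* Q = fun i => d i - μ i := by
      rw [hQeq, Matrix.vecMul_sub, ← Matrix.vecMul_vecMul, hdP]
      funext i
      simp [B, Matrix.vecMul_diagonal, hμdef, Pi.sub_apply]
    have hsm : d ᵥ* (γ • Q) = γ • (d ᵥ* Q) := by
      funext j
      simp only [Matrix.vecMul, dotProduct, Matrix.smul_apply, smul_eq_mul,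
        Pi.smul_apply, Finset.mul_sum]
      exact Finset.sum_congr rfl fun i _ => by ring
    rw [hMdef, Matrix.vecMul_sub, Matrix.vecMul_one, hsm, hdQ]
    funext i
    simp only [Pi.sub_apply, Pi.smul_apply, smul_eq_mul]
    ring
  have hμd : ∀ i, μ i ≤ d i := by
    intro i
    show d i * β i ≤ d i
    nlinarith [hd i, hβ1 i]
  have hdMge : ∀ i, μ i ≤ (d ᵥ* M) i := by
    intro i
    rw [hdM]
    show μ i ≤ (1 - γ) * d i + γ * μ i
    have := hμd i
    nlinarith
  have hdMR : (d ᵥ* M) ᵥ* R = d := by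
    rw [Matrix.vecMul_vecMul, hMR, Matrix.vecMul_one]
  have hμR : ∀ j, (μ ᵥ* R) j ≤ d j := by
    intro j
    have h1 : (μ ᵥ* R) j = ∑ i, μ i * R i j := by
      simp [Matrix.vecMul, dotProduct]
    have h2 : ((d ᵥ* M) ᵥ* R) j = ∑ i, (d ᵥ* M) i * R i j := by
      simp [Matrix.vecMul, dotProduct]
    calc (μ ᵥ* R) j = ∑ i, μ i * R i j := h1
      _ ≤ ∑ i, (d ᵥ* M) i * R i j :=
          Finset.sum_le_sum fun i _ => mul_le_mul_of_nonneg_right (hdMge i) (hR0 i j)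
      _ = ((d ᵥ* M) ᵥ* R) j := h2.symm
      _ = d j := by rw [hdMR]
  have hμR0 : ∀ j, 0 ≤ (μ ᵥ* R) j := by
    intro j
    have h1 : (μ ᵥ* R) j = ∑ i, μ i * R i j := by
      simp [Matrix.vecMul, dotProduct]
    rw [h1]
    exact Finset.sum_nonneg fun i _ => mul_nonneg (hμpos i).le (hR0 i j)
  have key : ∀ (a b c : ℝ) (f : S → ℝ), a * (b * ((∑ t, f t) * c)) = ∑ t, b * c * (a * f t) := by
    intro a b c f
    calc a * (b * ((∑ t, f t) * c)) = (b * c * a) * ∑ t, f t := by ring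
      _ = ∑ t, b * c * a * f t := Finset.mul_sum _ _ _
      _ = ∑ t, b * c * (a * f t) := Finset.sum_congr rfl fun t _ => by ring
  have hcol : ∀ j, ∑ i, μ i * Pβ i j ≤ μ j := by
    intro j
    calc ∑ i, μ i * Pβ i j
        = ∑ i, ∑ t, γ * β j * (μ i * (R i t * P t j)) := by
          refine Finset.sum_congr rfl fun i _ => ?_
          rw [hPβapp i j]
          exact key (μ i) γ (β j) (fun t => R i t * P t j)
      _ = ∑ t, ∑ i, γ * β j * (μ i * (R i t * P t j)) := Finset.sum_comm
      _ = ∑ t, γ * β j * ((∑ i, μ i * R i t) * P t j) := by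
          refine Finset.sum_congr rfl fun t _ => ?_
          rw [Finset.sum_mul, Finset.mul_sum]
          exact Finset.sum_congr rfl fun i _ => by ring
      _ ≤ ∑ t, γ * β j * (d t * P t j) := by
          refine Finset.sum_le_sum fun t _ => ?_
          have h1 : (∑ i, μ i * R i t) ≤ d t := by
            have h := hμR t
            simpa [Matrix.vecMul, dotProduct] using h
          exact mul_le_mul_of_nonneg_left
            (mul_le_mul_of_nonneg_right h1 (hP0 t j)) (mul_nonneg hγ0 (hβ0 j))
      _ = γ * β j * ∑ t, d t * P t j := (Finset.mul_sum _ _ _).symm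
      _ = γ * β j * d j := by
          have h : ∑ t, d t * P t j = d j := by
            have h2 := congrFun hdP j
            simpa [Matrix.vecMul, dotProduct] using h2
          rw [h]
      _ ≤ μ j := by
          show γ * β j * d j ≤ d j * β j
          nlinarith [mul_nonneg (hd j).le (hβ0 j)]
  -- the core matrix G and its quadratic form
  set G : Matrix S S ℝ := diagonal d * B * (1 - Pβ) with hGdef
  have hDB : diagonal d * B = diagonal μ := by
    show diagonal d * diagonal β = _
    rw [Matrix.diagonal_mul_diagonal]
  have hG : ∀ s s', G s s' = μ s * ((1 : Matrix S S ℝ) s s' - Pβ s s') := by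
    intro s s'
    rw [hGdef, hDB, Matrix.diagonal_mul, Matrix.sub_apply]
  have hquad : ∀ x : S → ℝ, x ≠ 0 → 0 < x ⬝ᵥ (G *ᵥ x) := by
    intro x hx
    have hxG : x ⬝ᵥ (G *ᵥ x)
        = (∑ s, μ s * x s ^ 2) - ∑ s, ∑ s', μ s * Pβ s s' * (x s * x s') := by
      simp only [dotProduct, Matrix.mulVec]
      rw [← Finset.sum_sub_distrib]
      refine Finset.sum_congr rfl fun s _ => ?_
      calc x s * ∑ s', G s s' * x s'
          = ∑ s', (μ s * ((1 : Matrix S S ℝ) s s' * x s') * x s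
              - μ s * Pβ s s' * (x s * x s')) := by
            rw [Finset.mul_sum]
            refine Finset.sum_congr rfl fun s' _ => ?_
            rw [hG]
            ring
        _ = μ s * x s ^ 2 - ∑ s', μ s * Pβ s s' * (x s * x s') := by
            rw [Finset.sum_sub_distrib]
            congr 1
            rw [Finset.sum_congr rfl fun s' _ =>
              show μ s * ((1 : Matrix S S ℝ) s s' * x s') * x s
                = (if s = s' then μ s * x s' * x s else 0) from by
                  by_cases h : s = s' <;> simp [Matrix.one_apply, h],
              Finset.sum_ite_eq]
            simp [Finset.mem_univ]
            ring
    obtain ⟨s₀, hs₀⟩ : ∃ s, x s ≠ 0 := by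
      by_contra h
      push_neg at h
      exact hx (funext h)
    have hTpos : 0 < ∑ s, μ s * x s ^ 2 := by
      refine Finset.sum_pos' (fun s _ => mul_nonneg (hμpos s).le (sq_nonneg _)) ?_
      refine ⟨s₀, Finset.mem_univ _, mul_pos (hμpos s₀) ?_⟩
      exact lt_of_le_of_ne (sq_nonneg _) (Ne.symm (pow_ne_zero 2 hs₀))
    have hcross : ∑ s, ∑ s', μ s * Pβ s s' * (x s * x s')
        ≤ (γ * (∑ s, μ s * x s ^ 2) + ∑ s, μ s * x s ^ 2) / 2 := by
      have hb1 : ∑ s, ∑ s', μ s * Pβ s s' * x s ^ 2 ≤ γ * ∑ s, μ s * x s ^ 2 := by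
        rw [Finset.mul_sum]
        refine Finset.sum_le_sum fun s _ => ?_
        have e : ∑ s', μ s * Pβ s s' * x s ^ 2 = (μ s * x s ^ 2) * ∑ s', Pβ s s' := by
          rw [Finset.mul_sum]
          exact Finset.sum_congr rfl fun s' _ => by ring
        rw [e]
        calc (μ s * x s ^ 2) * ∑ s', Pβ s s' ≤ (μ s * x s ^ 2) * γ :=
              mul_le_mul_of_nonneg_left (hrow s)
                (mul_nonneg (hμpos s).le (sq_nonneg _))
          _ = γ * (μ s * x s ^ 2) := by ring
      have hb2 : ∑ s, ∑ s', μ s * Pβ s s' * x s' ^ 2 ≤ ∑ s, μ s * x s ^ 2 := by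
        rw [Finset.sum_comm]
        refine Finset.sum_le_sum fun s' _ => ?_
        have e : ∑ s, μ s * Pβ s s' * x s' ^ 2 = (∑ s, μ s * Pβ s s') * x s' ^ 2 :=
          (Finset.sum_mul _ _ _).symm
        rw [e]
        exact mul_le_mul_of_nonneg_right (hcol s') (sq_nonneg _)
      have hsplit : ∑ s, ∑ s', μ s * Pβ s s' * (x s * x s')
          ≤ (∑ s, ∑ s', μ s * Pβ s s' * x s ^ 2
            + ∑ s, ∑ s', μ s * Pβ s s' * x s' ^ 2) / 2 := by
        rw [← Finset.sum_add_distrib, Finset.sum_div]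
        refine Finset.sum_le_sum fun s _ => ?_
        rw [← Finset.sum_add_distrib, Finset.sum_div]
        refine Finset.sum_le_sum fun s' _ => ?_
        have hc : 0 ≤ μ s * Pβ s s' := mul_nonneg (hμpos s).le (hPβ0 s s')
        nlinarith [sq_nonneg (x s - x s')]
      refine hsplit.trans ?_
      have := add_le_add hb1 hb2
      linarith
    rw [hxG]
    nlinarith [mul_pos (show (0:ℝ) < 1 - γ by linarith) hTpos]
  -- assembling
  have hA : A = Φᵀ * (G * Φ) := by
    show Φᵀ * diagonal d * B * (1 - Pβ) * Φ = Φᵀ * (G * Φ)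
    rw [hGdef]
    simp only [Matrix.mul_assoc]
  have hmain : ∀ w : Fin k → ℝ, w ≠ 0 → 0 < w ⬝ᵥ A.mulVec w := by
    intro w hw
    have hx0 : Φ *ᵥ w ≠ 0 := by
      intro h
      apply hw
      refine funext (Fintype.linearIndependent_iff.1 hΦ w ?_)
      funext s
      rw [Finset.sum_apply]
      have h2 := congrFun h s
      simp only [Matrix.mulVec, dotProduct, Pi.zero_apply] at h2 ⊢
      simp only [Pi.smul_apply, Matrix.transpose_apply, smul_eq_mul]
      rw [← h2]
      exact Finset.sum_congr rfl fun j _ => by ring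
    have hAw : w ⬝ᵥ A.mulVec w = (Φ *ᵥ w) ⬝ᵥ (G *ᵥ (Φ *ᵥ w)) := by
      rw [hA]
      rw [show (Φᵀ * (G * Φ)).mulVec w = Φᵀ *ᵥ ((G * Φ) *ᵥ w) from
        (Matrix.mulVec_mulVec w Φᵀ (G * Φ)).symm]
      rw [Matrix.dotProduct_mulVec, Matrix.vecMul_transpose, ← Matrix.mulVec_mulVec]
    rw [hAw]
    exact hquad _ hx0
  refine ⟨hmain, ?_⟩
  rw [Matrix.isUnit_iff_isUnit_det, isUnit_iff_ne_zero]
  intro h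
  obtain ⟨v, hv, hmv⟩ := Matrix.exists_mulVec_eq_zero_iff.2 h
  have hpos := hmain v hv
  rw [hmv] at hpos
  simp at hpos
end

section
/- Let 0 ≤ γ < 1, let d : S → ℝ be arbitrary with D the diagonal matrix D(s,s) = d(s), let Φ : Matrix S (Fin k) ℝ, and let r ∈ ℝ^S. Define A = Φᵀ·D·B·(I − P^β)·Φ, b = Φᵀ·D·B·(I − γ·P·(I−B))⁻¹·r, and the operator T^β v = B·(I − γ·P·(I−B))⁻¹·(r + γ·P·B·v) + (I−B)·v for v ∈ ℝ^S. Then for every w ∈ ℝ^k, b − A·w = Φᵀ·D·(T^β(Φ·w) − Φ·w). (Forward–backward equivalence in expectation.) -/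
open Matrix

private lemma aux_stmt11 {S : Type*} [Fintype S] [DecidableEq S] {k : ℕ}
    (P B M D : Matrix S S ℝ) (Φ : Matrix S (Fin k) ℝ) (γ : ℝ) (r : S → ℝ)
    (w : Fin k → ℝ) :
    (Φᵀ * D * B * M).mulVec r - (Φᵀ * D * B * (1 - γ • (M * P * B)) * Φ).mulVec w
      = (Φᵀ * D).mulVec
          (B.mulVec (M.mulVec (r + γ • (P * B).mulVec (Φ.mulVec w)))
            + (1 - B).mulVec (Φ.mulVec w) - Φ.mulVec w) := by
  simp only [mulVec_add, mulVec_sub, mulVec_smul, mulVec_mulVec, sub_mulVec,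
    smul_mulVec, one_mulVec, Matrix.mul_sub, Matrix.sub_mul, Matrix.mul_one,
    mul_smul_comm, smul_mul_assoc, Matrix.smul_mul, Matrix.mul_smul, Matrix.one_mul, Matrix.mul_assoc]
  abel

/-- forward–backward equivalence in expectation: with
`A = Φᵀ·D·B·(I − P^β)·Φ`, `b = Φᵀ·D·B·(I − γ·P·(I−B))⁻¹·r` and
`T^β v = B·(I − γ·P·(I−B))⁻¹·(r + γ·P·B·v) + (I−B)·v`, for every `w`,
`b − A·w = Φᵀ·D·(T^β(Φ·w) − Φ·w)`. -/
theorem stmt_11 {S : Type*} [Fintype S] [Nonempty S] [DecidableEq S]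
    (P : Matrix S S ℝ) (hP0 : ∀ s s', 0 ≤ P s s') (hP1 : ∀ s, ∑ s', P s s' = 1)
    (β : S → ℝ) (hβ0 : ∀ s, 0 ≤ β s) (hβ1 : ∀ s, β s ≤ 1)
    (γ : ℝ) (hγ0 : 0 ≤ γ) (hγ1 : γ < 1)
    (d : S → ℝ) (k : ℕ) (hk : 0 < k) (Φ : Matrix S (Fin k) ℝ) (r : S → ℝ) :
    let B := diagonal β
    let Pβ := γ • ((1 - γ • (P * (1 - B)))⁻¹ * P * B)
    let A := Φᵀ * diagonal d * B * (1 - Pβ) * Φ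
    let b := (Φᵀ * diagonal d * B * (1 - γ • (P * (1 - B)))⁻¹).mulVec r
    let Tβ : (S → ℝ) → (S → ℝ) := fun v =>
      B.mulVec (((1 - γ • (P * (1 - B)))⁻¹).mulVec (r + γ • (P * B).mulVec v))
        + (1 - B).mulVec v
    ∀ w : Fin k → ℝ,
      b - A.mulVec w = (Φᵀ * diagonal d).mulVec (Tβ (Φ.mulVec w) - Φ.mulVec w) := by
  intro B Pβ A b Tβ w
  simp only [b, A, Tβ, Pβ]
  have h := aux_stmt11 P B ((1 - γ • (P * (1 - B)))⁻¹) (diagonal d) Φ γ r w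
  simp only [Matrix.smul_mul, Matrix.mul_assoc] at h ⊢
  exact h
end

section
/- Let k be a positive integer, let A be a real k×k matrix satisfying wᵀ·A·w > 0 for every nonzero w ∈ ℝ^k, let b ∈ ℝ^k, and let (α_t)_{t≥0} be a sequence of nonnegative reals with Σ_{t=0}^∞ α_t = ∞ and Σ_{t=0}^∞ α_t² < ∞ (the Robbins–Monro conditions). Then for any initial w_0 ∈ ℝ^k, the sequence of expected updates defined by w_{t+1} = w_t + α_t·(b − A·w_t) converges to the unique vector w* ∈ ℝ^k with A·w* = b. -/
open Matrix Filter Topology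

section aux

variable {k : ℕ}

lemma dp_self_nonneg (v : Fin k → ℝ) : 0 ≤ v ⬝ᵥ v :=
  Finset.sum_nonneg fun i _ => mul_self_nonneg (v i)

lemma dp_self_pos {v : Fin k → ℝ} (hv : v ≠ 0) : 0 < v ⬝ᵥ v :=
  lt_of_le_of_ne (dp_self_nonneg v) (fun h => hv (dotProduct_self_eq_zero.mp h.symm))

lemma cont_dp (A : Matrix (Fin k) (Fin k) ℝ) :
    Continuous fun x : Fin k → ℝ => x ⬝ᵥ A.mulVec x := by
  simp only [dotProduct, Matrix.mulVec]
  fun_prop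

lemma cont_dp_self : Continuous fun x : Fin k → ℝ => x ⬝ᵥ x := by
  simp only [dotProduct]
  fun_prop

lemma cont_dp_mul (A : Matrix (Fin k) (Fin k) ℝ) :
    Continuous fun x : Fin k → ℝ => (A.mulVec x) ⬝ᵥ (A.mulVec x) := by
  simp only [dotProduct, Matrix.mulVec]
  fun_prop

lemma sphere_compact : IsCompact {x : Fin k → ℝ | x ⬝ᵥ x = 1} := by
  apply Metric.isCompact_of_isClosed_isBounded
  · exact isClosed_eq cont_dp_self continuous_const
  · apply (Metric.isBounded_closedBall (x := (0 : Fin k → ℝ)) (r := 1)).subset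
    intro x hx
    simp only [Set.mem_setOf_eq] at hx
    simp only [Metric.mem_closedBall, dist_zero_right]
    rw [pi_norm_le_iff_of_nonneg zero_le_one]
    intro i
    rw [Real.norm_eq_abs, abs_le_one_iff_mul_self_le_one]
    calc x i * x i ≤ ∑ j, x j * x j :=
          Finset.single_le_sum (fun j _ => mul_self_nonneg (x j)) (Finset.mem_univ i)
      _ = 1 := hx

end aux

set_option maxHeartbeats 1000000 in
/-- deterministic core of the convergence theorem: if `A` is positive
definite in the sense that `wᵀ·A·w > 0` for all nonzero `w`, and the step sizes satisfy
the Robbins–Monro conditions, then for any initialization the expected-update recursion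
`w_{t+1} = w_t + α_t·(b − A·w_t)` converges to the unique `w*` with `A·w* = b`. -/
theorem stmt_13 (k : ℕ) (hk : 0 < k) (A : Matrix (Fin k) (Fin k) ℝ)
    (hA : ∀ x : Fin k → ℝ, x ≠ 0 → 0 < x ⬝ᵥ A.mulVec x)
    (b : Fin k → ℝ) (α : ℕ → ℝ) (hα0 : ∀ t, 0 ≤ α t)
    (hdiv : Tendsto (fun n => ∑ t ∈ Finset.range n, α t) atTop atTop)
    (hsq : Summable fun t => (α t) ^ 2)
    (w : ℕ → Fin k → ℝ)
    (hrec : ∀ t, w (t + 1) = w t + α t • (b - A.mulVec (w t))) :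
    ∃ wstar : Fin k → ℝ, A.mulVec wstar = b ∧
      (∀ w' : Fin k → ℝ, A.mulVec w' = b → w' = wstar) ∧
      Tendsto w atTop (𝓝 wstar) := by
  -- mulVec is injective
  have hinj : Function.Injective A.mulVec := by
    intro x y hxy
    by_contra hne
    have hxys : x - y ≠ 0 := sub_ne_zero.mpr hne
    have := hA (x - y) hxys
    rw [Matrix.mulVec_sub, hxy, sub_self, dotProduct_zero] at this
    exact lt_irrefl 0 this
  have hinj' : Function.Injective A.mulVecLin := by
    exact hinj
  have hsurj : Function.Surjective A.mulVecLin :=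
    (LinearMap.injective_iff_surjective).mp hinj'
  obtain ⟨wstar, hws⟩ := hsurj b
  have hws' : A.mulVec wstar = b := hws
  refine ⟨wstar, hws', fun w' hw' => hinj (by rw [hw', hws']), ?_⟩
  set S : Set (Fin k → ℝ) := {x : Fin k → ℝ | x ⬝ᵥ x = 1} with hSdef
  -- S is nonempty
  have hSne : S.Nonempty := by
    refine ⟨Pi.single ⟨0, hk⟩ 1, ?_⟩
    simp only [hSdef, Set.mem_setOf_eq, dotProduct]
    rw [Finset.sum_eq_single ⟨0, hk⟩]
    · simp
    · intro j _ hj; simp [Pi.single_apply, hj]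
    · simp
  -- minimum of quadratic form, maximum of ‖Ax‖² on S
  obtain ⟨z, hzS, hzmin⟩ := sphere_compact.exists_isMinOn hSne (cont_dp A).continuousOn
  obtain ⟨y, hyS, hymax⟩ := sphere_compact.exists_isMaxOn hSne (cont_dp_mul A).continuousOn
  set μ : ℝ := z ⬝ᵥ A.mulVec z with hμdef
  set C : ℝ := (A.mulVec y) ⬝ᵥ (A.mulVec y) with hCdef
  have hzne : z ≠ 0 := by
    intro h; simp [h, Set.mem_setOf_eq] at hzS
  have hμpos : 0 < μ := hA z hzne
  have hCnn : 0 ≤ C := dp_self_nonneg _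
  -- key inequalities for all x
  have hscale : ∀ x : Fin k → ℝ, x ≠ 0 →
      μ * (x ⬝ᵥ x) ≤ x ⬝ᵥ A.mulVec x ∧ (A.mulVec x) ⬝ᵥ (A.mulVec x) ≤ C * (x ⬝ᵥ x) := by
    intro x hx
    have hxx : 0 < x ⬝ᵥ x := dp_self_pos hx
    set r : ℝ := Real.sqrt (x ⬝ᵥ x) with hr
    have hrpos : 0 < r := Real.sqrt_pos.mpr hxx
    have hr2 : r * r = x ⬝ᵥ x := Real.mul_self_sqrt hxx.le
    have hmem : (r⁻¹ • x) ∈ S := by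
      simp only [hSdef, Set.mem_setOf_eq, smul_dotProduct, dotProduct_smul,
        smul_eq_mul]
      field_simp
      rw [sq, hr2]
    have hrne : r ≠ 0 := hrpos.ne'
    constructor
    · have h1 : μ ≤ (r⁻¹ • x) ⬝ᵥ A.mulVec (r⁻¹ • x) := hzmin hmem
      rw [Matrix.mulVec_smul, smul_dotProduct, dotProduct_smul,
        smul_eq_mul, smul_eq_mul] at h1
      have h2 := mul_le_mul_of_nonneg_left h1 (le_of_lt (mul_pos hrpos hrpos))
      calc μ * (x ⬝ᵥ x) = r * r * μ := by rw [hr2]; ring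
        _ ≤ r * r * (r⁻¹ * (r⁻¹ * (x ⬝ᵥ A.mulVec x))) := h2
        _ = x ⬝ᵥ A.mulVec x := by field_simp
    · have h1 : (A.mulVec (r⁻¹ • x)) ⬝ᵥ (A.mulVec (r⁻¹ • x)) ≤ C := hymax hmem
      rw [Matrix.mulVec_smul, smul_dotProduct, dotProduct_smul,
        smul_eq_mul, smul_eq_mul] at h1
      have h2 := mul_le_mul_of_nonneg_left h1 (le_of_lt (mul_pos hrpos hrpos))
      calc (A.mulVec x) ⬝ᵥ (A.mulVec x)
          = r * r * (r⁻¹ * (r⁻¹ * ((A.mulVec x) ⬝ᵥ (A.mulVec x)))) := by field_simp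
        _ ≤ r * r * C := h2
        _ = C * (x ⬝ᵥ x) := by rw [hr2]; ring
  -- error sequence
  set e : ℕ → Fin k → ℝ := fun t => w t - wstar with hedef
  have herec : ∀ t, e (t + 1) = e t - α t • A.mulVec (e t) := by
    intro t
    simp only [hedef, hrec t, Matrix.mulVec_sub, hws']
    ext i
    simp [Matrix.mulVec_sub]
    ring
  set V : ℕ → ℝ := fun t => e t ⬝ᵥ e t with hVdef
  have hVnn : ∀ t, 0 ≤ V t := fun t => dp_self_nonneg _
  -- one-step bound
  have hstep : ∀ t, V (t + 1) ≤ (1 - 2 * μ * α t + C * (α t) ^ 2) * V t := by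
    intro t
    by_cases hzero : e t = 0
    · have : e (t + 1) = 0 := by rw [herec t, hzero]; simp
      simp [hVdef, this, hzero]
    · obtain ⟨hlow, hupp⟩ := hscale (e t) hzero
      have hexp : V (t + 1) = V t - 2 * α t * (e t ⬝ᵥ A.mulVec (e t))
          + (α t) ^ 2 * ((A.mulVec (e t)) ⬝ᵥ (A.mulVec (e t))) := by
        simp only [hVdef]
        simp only [herec t, sub_dotProduct, dotProduct_sub,
          smul_dotProduct, dotProduct_smul, smul_eq_mul]
        rw [dotProduct_comm (A.mulVec (e t)) (e t)]
        ring
      rw [hexp]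
      have h1 : 2 * α t * (μ * (e t ⬝ᵥ e t)) ≤ 2 * α t * (e t ⬝ᵥ A.mulVec (e t)) :=
        mul_le_mul_of_nonneg_left hlow (mul_nonneg (by norm_num) (hα0 t))
      have h2 : (α t) ^ 2 * ((A.mulVec (e t)) ⬝ᵥ (A.mulVec (e t)))
          ≤ (α t) ^ 2 * (C * (e t ⬝ᵥ e t)) := mul_le_mul_of_nonneg_left hupp (sq_nonneg _)
      nlinarith [h1, h2]
  -- α t → 0
  have hα_to0 : Tendsto α atTop (𝓝 0) := by
    have h2 : Tendsto (fun t => (α t) ^ 2) atTop (𝓝 0) := hsq.tendsto_atTop_zero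
    have := (Real.continuous_sqrt.tendsto 0).comp h2
    simp only [Function.comp_def, Real.sqrt_zero] at this
    refine this.congr (fun t => ?_)
    rw [Real.sqrt_sq (hα0 t)]
  -- eventually α t ≤ μ / (C + 1)
  have hδpos : 0 < μ / (C + 1) := div_pos hμpos (by linarith)
  obtain ⟨T, hT⟩ := (Metric.tendsto_atTop.mp hα_to0 (μ / (C + 1)) hδpos)
  have hTsmall : ∀ t, T ≤ t → α t ≤ μ / (C + 1) := by
    intro t ht
    have := hT t ht
    rw [Real.dist_eq, sub_zero, abs_of_nonneg (hα0 t)] at this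
    exact this.le
  -- for t ≥ T : V (t+1) ≤ exp (-μ * α t) * V t
  have hstep' : ∀ t, T ≤ t → V (t + 1) ≤ Real.exp (-(μ * α t)) * V t := by
    intro t ht
    have hfac : 1 - 2 * μ * α t + C * (α t) ^ 2 ≤ 1 - μ * α t := by
      have h1 : C * α t ≤ μ := by
        have := hTsmall t ht
        have h2 : C * α t ≤ C * (μ / (C + 1)) :=
          mul_le_mul_of_nonneg_left this hCnn
        have h3 : C * (μ / (C + 1)) ≤ μ := by
          rw [mul_div_assoc', div_le_iff₀ (by linarith : (0:ℝ) < C + 1)]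
          nlinarith
        linarith
      nlinarith [hα0 t, mul_le_mul_of_nonneg_right h1 (hα0 t)]
    have hexp : 1 - μ * α t ≤ Real.exp (-(μ * α t)) := by
      have := Real.add_one_le_exp (-(μ * α t))
      linarith
    calc V (t + 1) ≤ (1 - 2 * μ * α t + C * (α t) ^ 2) * V t := hstep t
      _ ≤ Real.exp (-(μ * α t)) * V t := by
          apply mul_le_mul_of_nonneg_right _ (hVnn t)
          linarith
  -- iterate: V (T + n) ≤ V T * exp (-μ * ∑_{t<n} α (T + t))
  have hiter : ∀ n, V (T + n) ≤ V T * Real.exp (-(μ * ∑ t ∈ Finset.range n, α (T + t))) := by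
    intro n
    induction n with
    | zero => simp
    | succ n ih =>
      have h1 : V (T + n + 1) ≤ Real.exp (-(μ * α (T + n))) * V (T + n) :=
        hstep' (T + n) (Nat.le_add_right T n)
      have h2 : Real.exp (-(μ * α (T + n))) * V (T + n)
          ≤ Real.exp (-(μ * α (T + n))) * (V T * Real.exp (-(μ * ∑ t ∈ Finset.range n, α (T + t)))) :=
        mul_le_mul_of_nonneg_left ih (Real.exp_nonneg _)
      have h3 : Real.exp (-(μ * α (T + n))) * (V T * Real.exp (-(μ * ∑ t ∈ Finset.range n, α (T + t))))
          = V T * Real.exp (-(μ * ∑ t ∈ Finset.range (n + 1), α (T + t))) := by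
        rw [Finset.sum_range_succ,
          show -(μ * (∑ t ∈ Finset.range n, α (T + t) + α (T + n)))
            = -(μ * α (T + n)) + -(μ * ∑ t ∈ Finset.range n, α (T + t)) from by ring,
          Real.exp_add]
        ring
      have : T + (n + 1) = T + n + 1 := by ring
      rw [this]
      calc V (T + n + 1) ≤ _ := h1
        _ ≤ _ := h2
        _ = _ := h3
  -- the RHS tends to 0
  have hsum_shift : Tendsto (fun n => ∑ t ∈ Finset.range n, α (T + t)) atTop atTop := by
    have heq : ∀ n, ∑ t ∈ Finset.range n, α (T + t)
        = (∑ t ∈ Finset.range (T + n), α t) + -(∑ t ∈ Finset.range T, α t) := by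
      intro n
      rw [Finset.sum_range_add]
      ring
    have h1 : Tendsto (fun n => ∑ t ∈ Finset.range (T + n), α t) atTop atTop := by
      refine hdiv.comp ?_
      exact tendsto_atTop_atTop.mpr (fun m => ⟨m, fun n hn => by omega⟩)
    have h2 := tendsto_atTop_add_const_right atTop (-(∑ t ∈ Finset.range T, α t)) h1
    exact h2.congr (fun n => (heq n).symm)
  have hrhs : Tendsto (fun n => V T * Real.exp (-(μ * ∑ t ∈ Finset.range n, α (T + t))))
      atTop (𝓝 0) := by
    have h1 : Tendsto (fun n => -(μ * ∑ t ∈ Finset.range n, α (T + t))) atTop atBot := by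
      have := tendsto_neg_atTop_atBot.comp (hsum_shift.const_mul_atTop hμpos)
      simpa [Function.comp_def] using this
    have h2 := Real.tendsto_exp_atBot.comp h1
    have := h2.const_mul (V T)
    simpa using this
  -- squeeze : V (T + n) → 0
  have hVto0' : Tendsto (fun n => V (T + n)) atTop (𝓝 0) :=
    tendsto_of_tendsto_of_tendsto_of_le_of_le tendsto_const_nhds hrhs
      (fun n => hVnn (T + n)) (fun n => hiter n)
  have hVto0 : Tendsto V atTop (𝓝 0) := by
    have := (tendsto_add_atTop_iff_nat T).mp (hVto0'.congr (fun n => by rw [Nat.add_comm]))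
    exact this
  -- coordinates of e tend to 0
  have he_to0 : Tendsto e atTop (𝓝 0) := by
    rw [tendsto_pi_nhds]
    intro i
    have hsq_i : ∀ t, (e t i) * (e t i) ≤ V t := by
      intro t
      exact Finset.single_le_sum (fun j _ => mul_self_nonneg (e t j)) (Finset.mem_univ i)
    have h1 : Tendsto (fun t => e t i * e t i) atTop (𝓝 0) :=
      tendsto_of_tendsto_of_tendsto_of_le_of_le tendsto_const_nhds hVto0
        (fun t => mul_self_nonneg _) hsq_i
    have h2 := (Real.continuous_sqrt.tendsto 0).comp h1
    simp only [Function.comp_def, Real.sqrt_zero] at h2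
    have h3 : Tendsto (fun t => |e t i|) atTop (𝓝 0) := by
      refine h2.congr (fun t => ?_)
      rw [← Real.sqrt_mul_self (abs_nonneg (e t i)), abs_mul_abs_self]
    exact (tendsto_zero_iff_abs_tendsto_zero (f := fun t => e t i) (l := atTop)).mpr h3
  -- conclude
  have : Tendsto (fun t => e t + wstar) atTop (𝓝 (0 + wstar)) :=
    he_to0.add tendsto_const_nhds
  rw [zero_add] at this
  refine this.congr (fun t => ?_)
  simp [hedef]
end

section
/- Let 0 ≤ γ < 1, let d : S → ℝ with D the diagonal matrix D(s,s) = d(s), let Φ : Matrix S (Fin k) ℝ, and suppose (D_t)_{t≥0} is a sequence of S×S diagonal matrices such that there exist constants C ≥ 0 and 0 ≤ ρ < 1 with ‖D_t − D‖ ≤ C·ρ^t for all t (operator norm induced by the Euclidean norm). For each t define M_t = Φᵀ·B·D_t·(I − P^β)·Φ − Φᵀ·B·D_t·(Σ_{m=t+1}^∞ (γ·P·(I−B))^m)·(I − γ·P)·Φ, and let M = Φᵀ·B·D·(I − P^β)·Φ. Then Σ_{t=0}^∞ ‖M_t − M‖ < ∞; i.e., the bias of the time-t expected update matrices relative to their stationary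 limit is summable. -/
open Matrix

/-- The operator norm of a square real matrix induced by the Euclidean norm. -/
noncomputable def euclOpNorm {n : Type*} [Fintype n] [DecidableEq n]
    (M : Matrix n n ℝ) : ℝ :=
  ‖Matrix.toEuclideanCLM (𝕜 := ℝ) M‖

section Aux
variable {n : Type*} [Fintype n] [DecidableEq n]

lemma eucl_abs_apply_le_norm (x : EuclideanSpace ℝ n) (j : n) : |x j| ≤ ‖x‖ := by
  rw [EuclideanSpace.norm_eq]
  rw [← Real.sqrt_sq_eq_abs]
  apply Real.sqrt_le_sqrt
  have : ∀ i, ‖x i‖ ^ 2 = x i ^ 2 := fun i => by simp [Real.norm_eq_abs, sq_abs]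
  calc x j ^ 2 ≤ ∑ i, x i ^ 2 :=
        Finset.single_le_sum (f := fun i => x i ^ 2) (fun i _ => sq_nonneg _) (Finset.mem_univ j)
    _ = ∑ i, ‖x i‖ ^ 2 := by simp [this]

lemma eON_entry_le (X : Matrix n n ℝ) (i j : n) : |X i j| ≤ euclOpNorm X := by
  have hx : ‖(EuclideanSpace.single j (1:ℝ) : EuclideanSpace ℝ n)‖ = 1 := by
    simp [EuclideanSpace.norm_single]
  have h := (toEuclideanCLM (𝕜 := ℝ) X).le_opNorm (EuclideanSpace.single j (1:ℝ))
  rw [hx, mul_one] at h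
  refine le_trans ?_ h
  have happ : (toEuclideanCLM (𝕜 := ℝ) X) (EuclideanSpace.single j (1:ℝ)) =
      (WithLp.equiv 2 (n → ℝ)).symm (X *ᵥ Pi.single j 1) := by
    rfl
  rw [happ]
  refine le_trans ?_ (eucl_abs_apply_le_norm _ i)
  simp [mulVec_single]

lemma eON_std (i j : n) (c : ℝ) : euclOpNorm (Matrix.single i j c) ≤ |c| := by
  apply ContinuousLinearMap.opNorm_le_bound _ (abs_nonneg c)
  intro x
  have h : (toEuclideanCLM (𝕜 := ℝ) (Matrix.single i j c)) x =
      (WithLp.equiv 2 (n → ℝ)).symm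
        (Matrix.single i j c *ᵥ (WithLp.equiv 2 (n → ℝ) x)) := rfl
  rw [h, single_mulVec]
  have h3 : Function.update (0 : n → ℝ) i (c * (WithLp.equiv 2 (n → ℝ) x) j)
      = Pi.single i (c * (WithLp.equiv 2 (n → ℝ) x) j) := rfl
  rw [h3]
  have h4 : ((WithLp.equiv 2 (n → ℝ)).symm (Pi.single i (c * (WithLp.equiv 2 (n → ℝ) x) j)))
      = EuclideanSpace.single i (c * (WithLp.equiv 2 (n → ℝ) x) j) := rfl
  rw [h4, EuclideanSpace.norm_single, Real.norm_eq_abs, abs_mul]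
  gcongr
  exact eucl_abs_apply_le_norm x j

lemma eON_le_sum (X : Matrix n n ℝ) : euclOpNorm X ≤ ∑ i, ∑ j, |X i j| := by
  conv_lhs => rw [matrix_eq_sum_single X]
  unfold euclOpNorm
  rw [map_sum]
  refine le_trans (norm_sum_le _ _) (Finset.sum_le_sum fun i _ => ?_)
  rw [map_sum]
  exact le_trans (norm_sum_le _ _) (Finset.sum_le_sum fun j _ => eON_std i j _)

lemma eON_mul_le (X Y : Matrix n n ℝ) :
    euclOpNorm (X * Y) ≤ euclOpNorm X * euclOpNorm Y := by
  simp only [euclOpNorm, _root_.map_mul]; exact norm_mul_le _ _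

end Aux

section Pow
variable {S : Type*} [Fintype S] [DecidableEq S]

lemma pow_bound (Q : Matrix S S ℝ) (γ : ℝ) (hγ : 0 ≤ γ)
    (h0 : ∀ i j, 0 ≤ Q i j) (h1 : ∀ i, ∑ j, Q i j ≤ γ) (m : ℕ) :
    (∀ i j, 0 ≤ (Q ^ m) i j) ∧ ∀ i, ∑ j, (Q ^ m) i j ≤ γ ^ m := by
  induction m with
  | zero =>
    constructor
    · intro i j; simp [Matrix.one_apply]; positivity
    · intro i; simp [Matrix.one_apply]
  | succ n ih =>
    constructor
    · intro i j
      rw [pow_succ, Matrix.mul_apply]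
      exact Finset.sum_nonneg fun m' _ => mul_nonneg (ih.1 i m') (h0 m' j)
    · intro i
      have : ∑ j, (Q ^ (n + 1)) i j = ∑ m', (Q ^ n) i m' * ∑ j, Q m' j := by
        simp only [pow_succ, Matrix.mul_apply, Finset.mul_sum]
        exact Finset.sum_comm
      rw [this, pow_succ]
      calc ∑ m', (Q ^ n) i m' * ∑ j, Q m' j ≤ ∑ m', (Q ^ n) i m' * γ :=
            Finset.sum_le_sum fun m' _ => mul_le_mul_of_nonneg_left (h1 m') (ih.1 i m')
        _ = (∑ m', (Q ^ n) i m') * γ := by rw [Finset.sum_mul]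
        _ ≤ γ ^ n * γ := mul_le_mul_of_nonneg_right (ih.2 i) hγ

lemma pow_entry_abs (Q : Matrix S S ℝ) (γ : ℝ) (hγ : 0 ≤ γ)
    (h0 : ∀ i j, 0 ≤ Q i j) (h1 : ∀ i, ∑ j, Q i j ≤ γ) (m : ℕ) (i j : S) :
    |(Q ^ m) i j| ≤ γ ^ m := by
  obtain ⟨hpos, hrow⟩ := pow_bound Q γ hγ h0 h1 m
  rw [abs_of_nonneg (hpos i j)]
  exact le_trans (Finset.single_le_sum (f := fun j => (Q ^ m) i j)
    (fun j _ => hpos i j) (Finset.mem_univ j)) (hrow i)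

lemma tail_bound (Q : Matrix S S ℝ) (γ : ℝ) (hγ0 : 0 ≤ γ) (hγ1 : γ < 1)
    (hb : ∀ m i j, |(Q ^ m) i j| ≤ γ ^ m) (t : ℕ) :
    euclOpNorm (∑' m : ℕ, Q ^ (m + (t + 1))) ≤
      (Fintype.card S : ℝ) ^ 2 * (γ ^ (t + 1) * (1 - γ)⁻¹) := by
  have hgeo : Summable fun m : ℕ => γ ^ (m + (t + 1)) := by
    simpa [pow_add] using (summable_geometric_of_lt_one hγ0 hγ1).mul_right (γ ^ (t + 1))
  have hsum : ∀ i j, Summable fun m => (Q ^ (m + (t + 1))) i j := by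
    intro i j
    apply Summable.of_abs
    exact Summable.of_nonneg_of_le (fun m => abs_nonneg _) (fun m => hb _ i j) hgeo
  have hS2 : Summable fun m => Q ^ (m + (t + 1)) :=
    Pi.summable.mpr fun i => Pi.summable.mpr fun j => hsum i j
  have happly : ∀ i j, (∑' m : ℕ, Q ^ (m + (t + 1))) i j = ∑' m, (Q ^ (m + (t + 1))) i j := by
    intro i j
    rw [show (∑' m : ℕ, Q ^ (m + (t + 1))) i = ∑' m, (Q ^ (m + (t + 1))) i from tsum_apply hS2, tsum_apply (Pi.summable.mpr fun j => hsum i j)]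
  have hentry : ∀ i j, |(∑' m : ℕ, Q ^ (m + (t + 1))) i j| ≤ γ ^ (t + 1) * (1 - γ)⁻¹ := by
    intro i j
    rw [happly i j]
    calc |∑' m, (Q ^ (m + (t + 1))) i j| ≤ ∑' m, |(Q ^ (m + (t + 1))) i j| := by
          simpa using norm_tsum_le_tsum_norm (f := fun m => (Q ^ (m + (t + 1))) i j)
            (by simpa [Real.norm_eq_abs] using (hsum i j).abs)
      _ ≤ ∑' m : ℕ, γ ^ (m + (t + 1)) :=
          Summable.tsum_le_tsum (fun m => hb _ i j) (hsum i j).abs hgeo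
      _ = γ ^ (t + 1) * (1 - γ)⁻¹ := by
          simp only [pow_add]
          rw [tsum_mul_right, tsum_geometric_of_lt_one hγ0 hγ1]
          ring
  calc euclOpNorm (∑' m : ℕ, Q ^ (m + (t + 1)))
      ≤ ∑ i, ∑ j, |(∑' m : ℕ, Q ^ (m + (t + 1))) i j| := eON_le_sum _
    _ ≤ ∑ _i : S, ∑ _j : S, γ ^ (t + 1) * (1 - γ)⁻¹ :=
        Finset.sum_le_sum fun i _ => Finset.sum_le_sum fun j _ => hentry i j
    _ = (Fintype.card S : ℝ) ^ 2 * (γ ^ (t + 1) * (1 - γ)⁻¹) := by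
        simp [Finset.sum_const, Finset.card_univ]; ring

end Pow

lemma eON_conj_le {S K : Type*} [Fintype S] [DecidableEq S] [Fintype K] [DecidableEq K]
    (Φ : Matrix S K ℝ) (Y : Matrix S S ℝ) :
    euclOpNorm (Φᵀ * Y * Φ) ≤ (∑ s, ∑ a, |Φ s a|) ^ 2 * euclOpNorm Y := by
  have hentry : ∀ a b, |(Φᵀ * Y * Φ) a b| ≤
      (∑ s, |Φ s a|) * euclOpNorm Y * (∑ s', |Φ s' b|) := by
    intro a b
    have : (Φᵀ * Y * Φ) a b = ∑ s', (∑ s, Φ s a * Y s s') * Φ s' b := by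
      simp [Matrix.mul_apply, Matrix.transpose_apply]
    rw [this]
    calc |∑ s', (∑ s, Φ s a * Y s s') * Φ s' b|
        ≤ ∑ s', |(∑ s, Φ s a * Y s s')| * |Φ s' b| := by
          refine le_trans (Finset.abs_sum_le_sum_abs _ _) ?_
          simp [abs_mul]
      _ ≤ ∑ s', ((∑ s, |Φ s a|) * euclOpNorm Y) * |Φ s' b| := by
          refine Finset.sum_le_sum fun s' _ => mul_le_mul_of_nonneg_right ?_ (abs_nonneg _)
          calc |∑ s, Φ s a * Y s s'| ≤ ∑ s, |Φ s a| * |Y s s'| := by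
                refine le_trans (Finset.abs_sum_le_sum_abs _ _) ?_
                simp [abs_mul]
            _ ≤ ∑ s, |Φ s a| * euclOpNorm Y :=
                Finset.sum_le_sum fun s _ =>
                  mul_le_mul_of_nonneg_left (eON_entry_le Y s s') (abs_nonneg _)
            _ = (∑ s, |Φ s a|) * euclOpNorm Y := by rw [Finset.sum_mul]
      _ = (∑ s, |Φ s a|) * euclOpNorm Y * (∑ s', |Φ s' b|) := by rw [← Finset.mul_sum]
  calc euclOpNorm (Φᵀ * Y * Φ) ≤ ∑ a, ∑ b, |(Φᵀ * Y * Φ) a b| := eON_le_sum _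
    _ ≤ ∑ a : K, ∑ b : K, (∑ s, |Φ s a|) * euclOpNorm Y * (∑ s', |Φ s' b|) :=
        Finset.sum_le_sum fun a _ => Finset.sum_le_sum fun b _ => hentry a b
    _ ≤ (∑ s, ∑ a, |Φ s a|) ^ 2 * euclOpNorm Y := by
        have e1 : ∀ a : K, ∑ b : K, (∑ s, |Φ s a|) * euclOpNorm Y * (∑ s', |Φ s' b|)
            = (∑ s, |Φ s a|) * euclOpNorm Y * (∑ b : K, ∑ s', |Φ s' b|) := fun a =>
          (Finset.mul_sum _ _ _).symm
        simp only [e1]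
        rw [← Finset.sum_mul, ← Finset.sum_mul]
        have c1 : (∑ a : K, ∑ s, |Φ s a|) = ∑ s, ∑ a : K, |Φ s a| := Finset.sum_comm
        rw [c1, sq]
        apply le_of_eq
        ring

lemma eON_add_le {n : Type*} [Fintype n] [DecidableEq n] (X Y : Matrix n n ℝ) :
    euclOpNorm (X + Y) ≤ euclOpNorm X + euclOpNorm Y := by
  simp only [euclOpNorm, map_add]; exact norm_add_le _ _

lemma eON_sub_le {n : Type*} [Fintype n] [DecidableEq n] (X Y : Matrix n n ℝ) :
    euclOpNorm (X - Y) ≤ euclOpNorm X + euclOpNorm Y := by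
  simp only [euclOpNorm, map_sub]; exact norm_sub_le _ _

lemma matAlg {S : Type*} [Fintype S] [DecidableEq S] {k : ℕ}
    (B Dt D Pβ Tt G : Matrix S S ℝ) (Φ : Matrix S (Fin k) ℝ) :
    (Φᵀ * B * Dt * (1 - Pβ) * Φ - Φᵀ * B * Dt * Tt * (1 - G) * Φ) - Φᵀ * B * D * (1 - Pβ) * Φ =
      Φᵀ * (B * (Dt - D) * (1 - Pβ)) * Φ - Φᵀ * (B * Dt * Tt * (1 - G)) * Φ := by
  simp only [Matrix.sub_mul, Matrix.mul_sub, Matrix.mul_assoc, Matrix.mul_one]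
  abel

/-- if the time-`t` state-occupancy diagonal matrices `D_t` converge to
`D` geometrically (`‖D_t − D‖ ≤ C·ρ^t`), then the bias of the time-`t` expected update
matrices `M_t = Φᵀ·B·D_t·(I − P^β)·Φ − Φᵀ·B·D_t·(Σ_{m=t+1}^∞ (γ·P·(I−B))^m)·(I − γ·P)·Φ`
relative to the stationary limit `M = Φᵀ·B·D·(I − P^β)·Φ` is summable:
`Σ_t ‖M_t − M‖ < ∞`. -/
theorem stmt_15 {S : Type*} [Fintype S] [Nonempty S] [DecidableEq S]
    (P : Matrix S S ℝ) (hP0 : ∀ s s', 0 ≤ P s s') (hP1 : ∀ s, ∑ s', P s s' = 1)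
    (β : S → ℝ) (hβ0 : ∀ s, 0 ≤ β s) (hβ1 : ∀ s, β s ≤ 1)
    (γ : ℝ) (hγ0 : 0 ≤ γ) (hγ1 : γ < 1)
    (d : S → ℝ) (k : ℕ) (hk : 0 < k) (Φ : Matrix S (Fin k) ℝ)
    (dseq : ℕ → S → ℝ) (C ρ : ℝ) (hC : 0 ≤ C) (hρ0 : 0 ≤ ρ) (hρ1 : ρ < 1)
    (hmix : ∀ t : ℕ, euclOpNorm (diagonal (dseq t) - diagonal d) ≤ C * ρ ^ t) :
    let B := diagonal β
    let Q := γ • (P * (1 - B))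
    let Pβ := γ • ((1 - Q)⁻¹ * P * B)
    let Mt : ℕ → Matrix (Fin k) (Fin k) ℝ := fun t =>
      Φᵀ * B * diagonal (dseq t) * (1 - Pβ) * Φ -
        Φᵀ * B * diagonal (dseq t) * (∑' m : ℕ, Q ^ (m + (t + 1))) * (1 - γ • P) * Φ
    let M := Φᵀ * B * diagonal d * (1 - Pβ) * Φ
    Summable fun t : ℕ => euclOpNorm (Mt t - M) := by
  intro B Q Pβ Mt M
  -- entrywise facts about Q
  have hB1 : (1 : Matrix S S ℝ) - B = diagonal (fun s => 1 - β s) := by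
    rw [show (1 : Matrix S S ℝ) = diagonal (fun _ => 1) from (diagonal_one).symm]
    rw [show B = diagonal β from rfl, ← diagonal_sub]
  have hQe : ∀ i j, Q i j = γ * (P i j * (1 - β j)) := by
    intro i j
    show (γ • (P * (1 - B))) i j = _
    rw [Matrix.smul_apply, hB1, mul_diagonal]
    simp
  have hQ0 : ∀ i j, 0 ≤ Q i j := by
    intro i j
    rw [hQe]
    exact mul_nonneg hγ0 (mul_nonneg (hP0 i j) (by linarith [hβ1 j]))
  have hQ1 : ∀ i, ∑ j, Q i j ≤ γ := by
    intro i
    calc ∑ j, Q i j = γ * ∑ j, P i j * (1 - β j) := by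
          simp only [hQe, Finset.mul_sum]
      _ ≤ γ * ∑ j, P i j := by
          refine mul_le_mul_of_nonneg_left (Finset.sum_le_sum fun j _ => ?_) hγ0
          exact mul_le_of_le_one_right (hP0 i j) (by linarith [hβ0 j])
      _ = γ := by rw [hP1 i, mul_one]
  have hb : ∀ m i j, |(Q ^ m) i j| ≤ γ ^ m := pow_entry_abs Q γ hγ0 hQ0 hQ1
  have htail : ∀ t : ℕ, euclOpNorm (∑' m : ℕ, Q ^ (m + (t + 1))) ≤
      (Fintype.card S : ℝ) ^ 2 * (γ ^ (t + 1) * (1 - γ)⁻¹) :=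
    tail_bound Q γ hγ0 hγ1 hb
  -- constants
  set cΦ := (∑ s, ∑ a, |Φ s a|) ^ 2 with hcΦ
  have hcΦ0 : 0 ≤ cΦ := sq_nonneg _
  set eB := euclOpNorm B with heB
  set ePβ := euclOpNorm ((1 : Matrix S S ℝ) - Pβ) with hePβ
  set eP2 := euclOpNorm ((1 : Matrix S S ℝ) - γ • P) with heP2
  set eD := euclOpNorm (diagonal d) with heD
  set cS := (Fintype.card S : ℝ) ^ 2 with hcS
  have h0B : 0 ≤ eB := norm_nonneg _
  have h0Pβ : 0 ≤ ePβ := norm_nonneg _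
  have h0P2 : 0 ≤ eP2 := norm_nonneg _
  have h0D : 0 ≤ eD := norm_nonneg _
  have h0S : 0 ≤ cS := sq_nonneg _
  have hinv : 0 ≤ (1 - γ)⁻¹ := inv_nonneg.mpr (by linarith)
  have hDt : ∀ t, euclOpNorm (diagonal (dseq t)) ≤ eD + C := by
    intro t
    have h1 : diagonal (dseq t) = (diagonal (dseq t) - diagonal d) + diagonal d := by
      rw [sub_add_cancel]
    rw [h1]
    refine le_trans (eON_add_le _ _) ?_
    have h2 : euclOpNorm (diagonal (dseq t) - diagonal d) ≤ C := by
      refine le_trans (hmix t) ?_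
      calc C * ρ ^ t ≤ C * 1 :=
            mul_le_mul_of_nonneg_left (pow_le_one₀ hρ0 hρ1.le) hC
        _ = C := mul_one C
    linarith
  -- the key pointwise bound
  set K1 := cΦ * (eB * C * ePβ) with hK1
  set K2 := cΦ * (eB * ((eD + C) * ((cS * ((1 - γ)⁻¹ * γ)) * eP2))) with hK2
  have key : ∀ t, euclOpNorm (Mt t - M) ≤ K1 * ρ ^ t + K2 * γ ^ t := by
    intro t
    have heq : Mt t - M =
        Φᵀ * (B * (diagonal (dseq t) - diagonal d) * (1 - Pβ)) * Φ -
          Φᵀ * (B * diagonal (dseq t) * (∑' m : ℕ, Q ^ (m + (t + 1))) * (1 - γ • P)) * Φ :=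
      matAlg B (diagonal (dseq t)) (diagonal d) Pβ (∑' m : ℕ, Q ^ (m + (t + 1))) (γ • P) Φ
    have hY1 : euclOpNorm (B * (diagonal (dseq t) - diagonal d) * (1 - Pβ)) ≤
        eB * (C * ρ ^ t) * ePβ := by
      calc euclOpNorm (B * (diagonal (dseq t) - diagonal d) * (1 - Pβ))
          ≤ euclOpNorm (B * (diagonal (dseq t) - diagonal d)) * ePβ := eON_mul_le _ _
        _ ≤ (eB * euclOpNorm (diagonal (dseq t) - diagonal d)) * ePβ :=
            mul_le_mul_of_nonneg_right (eON_mul_le _ _) h0Pβ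
        _ ≤ eB * (C * ρ ^ t) * ePβ :=
            mul_le_mul_of_nonneg_right
              (mul_le_mul_of_nonneg_left (hmix t) h0B) h0Pβ
    have hY2 : euclOpNorm (B * diagonal (dseq t) * (∑' m : ℕ, Q ^ (m + (t + 1))) * (1 - γ • P)) ≤
        eB * (eD + C) * (cS * (γ ^ (t + 1) * (1 - γ)⁻¹)) * eP2 := by
      have hBD : euclOpNorm (B * diagonal (dseq t)) ≤ eB * (eD + C) :=
        le_trans (eON_mul_le _ _) (mul_le_mul_of_nonneg_left (hDt t) h0B)
      have hBDT : euclOpNorm (B * diagonal (dseq t) * (∑' m : ℕ, Q ^ (m + (t + 1)))) ≤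
          eB * (eD + C) * (cS * (γ ^ (t + 1) * (1 - γ)⁻¹)) := by
        refine le_trans (eON_mul_le _ _) ?_
        exact mul_le_mul hBD (htail t) (norm_nonneg _)
          (mul_nonneg h0B (by linarith))
      refine le_trans (eON_mul_le _ _) (mul_le_mul_of_nonneg_right hBDT h0P2)
    calc euclOpNorm (Mt t - M)
        ≤ euclOpNorm (Φᵀ * (B * (diagonal (dseq t) - diagonal d) * (1 - Pβ)) * Φ) +
            euclOpNorm
              (Φᵀ * (B * diagonal (dseq t) * (∑' m : ℕ, Q ^ (m + (t + 1))) * (1 - γ • P)) * Φ) := by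
          rw [heq]; exact eON_sub_le _ _
      _ ≤ cΦ * euclOpNorm (B * (diagonal (dseq t) - diagonal d) * (1 - Pβ)) +
            cΦ * euclOpNorm
              (B * diagonal (dseq t) * (∑' m : ℕ, Q ^ (m + (t + 1))) * (1 - γ • P)) :=
          add_le_add (eON_conj_le _ _) (eON_conj_le _ _)
      _ ≤ cΦ * (eB * (C * ρ ^ t) * ePβ) +
            cΦ * (eB * (eD + C) * (cS * (γ ^ (t + 1) * (1 - γ)⁻¹)) * eP2) :=
          add_le_add (mul_le_mul_of_nonneg_left hY1 hcΦ0)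
            (mul_le_mul_of_nonneg_left hY2 hcΦ0)
      _ = K1 * ρ ^ t + K2 * γ ^ t := by rw [hK1, hK2, pow_succ]; ring
  have hsum : Summable fun t : ℕ => K1 * ρ ^ t + K2 * γ ^ t :=
    ((summable_geometric_of_lt_one hρ0 hρ1).mul_left K1).add
      ((summable_geometric_of_lt_one hγ0 hγ1).mul_left K2)
  exact Summable.of_nonneg_of_le (fun t => norm_nonneg _) key hsum
end

section
/- Let 0 ≤ γ < 1, let d : S → ℝ with D the diagonal matrix D(s,s) = d(s), and let Φ : Matrix S (Fin k) ℝ. Then the matrix equation X = Φᵀ·D·B + γ·X·P·(I−B), in the unknown k×S matrix X, has the unique solution X = Φᵀ·D·B·(I − γ·P·(I−B))⁻¹; moreover this solution satisfies X·(I − γ·P)·Φ = Φᵀ·D·B·(I − P^β)·Φ. -/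
open Matrix

/-- the stationary expected eligibility-trace equation
`X = Φᵀ·D·B + γ·X·P·(I−B)` has the unique solution
`X = Φᵀ·D·B·(I − γ·P·(I−B))⁻¹`, and this solution satisfies
`X·(I − γ·P)·Φ = Φᵀ·D·B·(I − P^β)·Φ`. -/
theorem stmt_16 {S : Type*} [Fintype S] [Nonempty S] [DecidableEq S]
    (P : Matrix S S ℝ) (hP0 : ∀ s s', 0 ≤ P s s') (hP1 : ∀ s, ∑ s', P s s' = 1)
    (β : S → ℝ) (hβ0 : ∀ s, 0 ≤ β s) (hβ1 : ∀ s, β s ≤ 1)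
    (γ : ℝ) (hγ0 : 0 ≤ γ) (hγ1 : γ < 1)
    (d : S → ℝ) (k : ℕ) (hk : 0 < k) (Φ : Matrix S (Fin k) ℝ) :
    let B := diagonal β
    let Pβ := γ • ((1 - γ • (P * (1 - B)))⁻¹ * P * B)
    let X₀ := Φᵀ * diagonal d * B * (1 - γ • (P * (1 - B)))⁻¹
    (X₀ = Φᵀ * diagonal d * B + γ • (X₀ * P * (1 - B))) ∧
    (∀ X : Matrix (Fin k) S ℝ,
      X = Φᵀ * diagonal d * B + γ • (X * P * (1 - B)) → X = X₀) ∧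
    X₀ * (1 - γ • P) * Φ = Φᵀ * diagonal d * B * (1 - Pβ) * Φ := by
  intro B Pβ X₀
  set C : Matrix (Fin k) S ℝ := Φᵀ * diagonal d * B with hC
  set M : Matrix S S ℝ := 1 - γ • (P * (1 - B)) with hMdef
  -- entrywise description of M
  have h1B : (1 : Matrix S S ℝ) - B = diagonal (fun s => 1 - β s) := by
    rw [← diagonal_one, ← diagonal_sub]
  have hMentry : ∀ i j, M i j = (if i = j then 1 else 0) - γ * (P i j * (1 - β j)) := by
    intro i j
    simp [hMdef, h1B, Matrix.sub_apply, Matrix.smul_apply, one_apply, mul_diagonal]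
  have hPle1 : ∀ i j, P i j ≤ 1 := by
    intro i j
    calc P i j ≤ ∑ j', P i j' := Finset.single_le_sum (fun j' _ => hP0 i j') (Finset.mem_univ j)
    _ = 1 := hP1 i
  -- g i j = γ * (P i j * (1 - β j)), nonneg, row sums ≤ γ
  have hg0 : ∀ i j, 0 ≤ γ * (P i j * (1 - β j)) := by
    intro i j
    exact mul_nonneg hγ0 (mul_nonneg (hP0 i j) (by linarith [hβ1 j]))
  have hgsum : ∀ i, ∑ j, γ * (P i j * (1 - β j)) ≤ γ := by
    intro i
    rw [← Finset.mul_sum]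
    have h1 : ∑ j, P i j * (1 - β j) ≤ ∑ j, P i j :=
      Finset.sum_le_sum (fun j _ => by nlinarith [hP0 i j, hβ0 j, hβ1 j])
    rw [hP1 i] at h1
    nlinarith
  have hdet : M.det ≠ 0 := by
    apply det_ne_zero_of_sum_row_lt_diag
    intro i
    have hgi : γ * (P i i * (1 - β i)) ≤ γ := by
      have h := Finset.single_le_sum (f := fun j => γ * (P i j * (1 - β j)))
        (fun j _ => hg0 i j) (Finset.mem_univ i)
      replace h : γ * (P i i * (1 - β i)) ≤ ∑ j, γ * (P i j * (1 - β j)) := h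
      linarith [hgsum i]
    have hdiag : ‖M i i‖ = 1 - γ * (P i i * (1 - β i)) := by
      rw [hMentry i i, if_pos rfl, Real.norm_eq_abs, abs_of_pos (by linarith)]
    rw [hdiag]
    have hoff : ∀ j ∈ Finset.univ.erase i, ‖M i j‖ = γ * (P i j * (1 - β j)) := by
      intro j hj
      have hij : i ≠ j := (Finset.ne_of_mem_erase hj).symm
      rw [hMentry i j, if_neg hij, Real.norm_eq_abs, zero_sub, abs_neg,
        abs_of_nonneg (hg0 i j)]
    rw [Finset.sum_congr rfl hoff]
    have herase : ∑ j ∈ Finset.univ.erase i, γ * (P i j * (1 - β j))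
        = (∑ j, γ * (P i j * (1 - β j))) - γ * (P i i * (1 - β i)) := by
      rw [Finset.sum_erase_eq_sub (Finset.mem_univ i)]
    rw [herase]
    linarith [hgsum i]
  have hu : IsUnit M.det := isUnit_iff_ne_zero.mpr hdet
  have hMM : M⁻¹ * M = 1 := nonsing_inv_mul M hu
  -- rewrite γ • (X * P * (1 - B)) = X * (1 - M)
  have key : ∀ X : Matrix (Fin k) S ℝ, γ • (X * P * (1 - B)) = X * (1 - M) := by
    intro X
    have : (1 : Matrix S S ℝ) - M = γ • (P * (1 - B)) := by
      rw [hMdef, sub_sub_cancel]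
    rw [this, Matrix.mul_smul, Matrix.mul_assoc]
  have key2 : ∀ X : Matrix (Fin k) S ℝ, γ • (X * P * (1 - B)) = X * (1 - M) := key
  have part1 : X₀ = C + γ • (X₀ * P * (1 - B)) := by
    rw [key]
    have hX0M : X₀ * M = C := by
      show C * M⁻¹ * M = C
      rw [Matrix.mul_assoc, hMM, Matrix.mul_one]
    rw [Matrix.mul_sub, Matrix.mul_one, hX0M]
    abel
  refine ⟨part1, ?_, ?_⟩
  · intro X hX
    rw [key] at hX
    have : X * M = C := by
      rw [Matrix.mul_sub, Matrix.mul_one] at hX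
      have h2 := sub_eq_of_eq_add hX
      simpa [sub_sub_cancel] using h2
    calc X = X * M * M⁻¹ := by rw [Matrix.mul_assoc, mul_nonsing_inv M hu, Matrix.mul_one]
    _ = C * M⁻¹ := by rw [this]
    _ = X₀ := rfl
  · have hsplit : (1 : Matrix S S ℝ) - γ • P = M - γ • (P * B) := by
      rw [hMdef, mul_sub, mul_one, smul_sub]
      abel
    have : X₀ * (1 - γ • P) = C * (1 - Pβ) := by
      rw [hsplit, show X₀ = C * M⁻¹ from rfl, Matrix.mul_sub, Matrix.mul_assoc C M⁻¹ M, hMM,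
        Matrix.mul_one, show Pβ = γ • (M⁻¹ * P * B) from rfl, Matrix.mul_sub, Matrix.mul_one]
      congr 1
      simp only [Matrix.mul_smul, Matrix.mul_assoc]
    rw [this]
end
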